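/- arXiv:math/0010109 — 2 statements merged into one kernel-verified Lean document; each statement's English description precedes it below -/
import Mathlib

section
/- Let w ∈ Sₙ and let (a₁,...,a_p) and (b₁,...,b_p) be any two reduced words for w. Then the composed operators ∂_{a₁}∘∂_{a₂}∘···∘∂_{a_p} and ∂_{b₁}∘∂_{b₂}∘···∘∂_{b_p} on ℚ[x₁,...,xₙ] are equal; in particular the operator ∂_w := ∂_{a₁}∘···∘∂_{a_p} is well defined, independently of the choice of reduced word for w. -/
open MvPolynomial

/-- The adjacent transposition sᵢ ∈ Sₙ (0-indexed: swaps positions i and i+1). -/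
def sAdj (n : ℕ) (i : ℕ) : Equiv.Perm (Fin n) :=
  if h : i + 1 < n then Equiv.swap ⟨i, Nat.lt_of_succ_lt h⟩ ⟨i + 1, h⟩ else 1

/-- The length ℓ(w): the number of inversions of w. -/
def lengthPerm {n : ℕ} (w : Equiv.Perm (Fin n)) : ℕ :=
  (Finset.univ.filter (fun p : Fin n × Fin n => p.1 < p.2 ∧ w p.2 < w p.1)).card

/-- A reduced word for w: a list of letters (0-indexed) whose simple reflections multiply
to w, of length ℓ(w). -/
def IsReducedWord (n : ℕ) (w : Equiv.Perm (Fin n)) (L : List ℕ) : Prop :=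
  (∀ a ∈ L, a + 1 < n) ∧ (L.map (sAdj n)).prod = w ∧ L.length = lengthPerm w

open Classical in
/-- The divided difference operator ∂ᵢ (0-indexed): ∂ᵢ f = (f − sᵢ·f)/(xᵢ − xᵢ₊₁). -/
noncomputable def divDiff {n : ℕ} (i : ℕ) (f : MvPolynomial (Fin n) ℚ) : MvPolynomial (Fin n) ℚ :=
  if h : i + 1 < n then
    if hd : (X ⟨i, Nat.lt_of_succ_lt h⟩ - X ⟨i + 1, h⟩ : MvPolynomial (Fin n) ℚ) ∣
        (f - rename (Equiv.swap ⟨i, Nat.lt_of_succ_lt h⟩ ⟨i + 1, h⟩) f) then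
      hd.choose
    else 0
  else 0

/-- The staircase monomial x₁^{n-1} x₂^{n-2} ⋯ x_{n-1}. -/
noncomputable def staircase (n : ℕ) : MvPolynomial (Fin n) ℚ :=
  ∏ i : Fin n, X i ^ (n - 1 - (i : ℕ))

theorem Equiv.Perm.apply_inv_self {α : Type*} (f : Equiv.Perm α) (x : α) : f (f⁻¹ x) = x :=
  Equiv.apply_symm_apply f x

theorem Equiv.Perm.inv_apply_self {α : Type*} (f : Equiv.Perm α) (x : α) : f⁻¹ (f x) = x :=
  Equiv.symm_apply_apply f x

lemma X_sub_X_ne {n : ℕ} {i j : Fin n} (h : i ≠ j) :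
    (X i - X j : MvPolynomial (Fin n) ℚ) ≠ 0 :=
  sub_ne_zero.mpr (fun hEq => h (MvPolynomial.X_injective hEq))

lemma dvd_key {n : ℕ} (u v : Fin n) (f : MvPolynomial (Fin n) ℚ) :
    (X u - X v) ∣ (f - rename (Equiv.swap u v) f) := by
  induction f using MvPolynomial.induction_on with
  | C a => simp
  | add p q hp hq =>
      have h : (p + q) - rename (Equiv.swap u v) (p + q)
          = (p - rename (Equiv.swap u v) p) + (q - rename (Equiv.swap u v) q) := by
        rw [map_add]; ring
      rw [h]; exact dvd_add hp hq
  | mul_X p k hp =>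
      have h : p * X k - rename (Equiv.swap u v) (p * X k)
          = (p - rename (Equiv.swap u v) p) * X k
            + rename (Equiv.swap u v) p * (X k - X (Equiv.swap u v k)) := by
        rw [map_mul, rename_X]; ring
      rw [h]
      refine dvd_add (hp.mul_right _) (Dvd.dvd.mul_left ?_ _)
      rcases eq_or_ne k u with rfl | hku
      · rw [Equiv.swap_apply_left]
      · rcases eq_or_ne k v with rfl | hkv
        · rw [Equiv.swap_apply_right]; exact ⟨-1, by ring⟩
        · rw [Equiv.swap_apply_of_ne_of_ne hku hkv]; simp

lemma divDiff_spec {n a : ℕ} (h : a + 1 < n) (f : MvPolynomial (Fin n) ℚ) :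
    (X ⟨a, Nat.lt_of_succ_lt h⟩ - X ⟨a + 1, h⟩ : MvPolynomial (Fin n) ℚ) * divDiff a f
      = f - rename (Equiv.swap ⟨a, Nat.lt_of_succ_lt h⟩ ⟨a + 1, h⟩) f := by
  rw [divDiff, dif_pos h, dif_pos (dvd_key _ _ f)]
  exact ((dvd_key (⟨a, Nat.lt_of_succ_lt h⟩ : Fin n) ⟨a + 1, h⟩ f).choose_spec).symm

lemma divDiff_eq {n a : ℕ} (h : a + 1 < n) {f g : MvPolynomial (Fin n) ℚ}
    (hg : (X ⟨a, Nat.lt_of_succ_lt h⟩ - X ⟨a + 1, h⟩ : MvPolynomial (Fin n) ℚ) * g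
      = f - rename (Equiv.swap ⟨a, Nat.lt_of_succ_lt h⟩ ⟨a + 1, h⟩) f) : divDiff a f = g :=
  mul_left_cancel₀ (X_sub_X_ne (i := ⟨a, Nat.lt_of_succ_lt h⟩) (j := ⟨a + 1, h⟩)
    (by simp [Fin.ext_iff])) (by rw [divDiff_spec h, hg])

lemma rename_swap_mul_eq {n : ℕ} (σ : Equiv.Perm (Fin n)) {p q r : MvPolynomial (Fin n) ℚ}
    {u v : Fin n} (h : (X u - X v) * p = q - r) :
    (X (σ u) - X (σ v)) * rename (⇑σ) p = rename (⇑σ) q - rename (⇑σ) r := by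
  have := congrArg (rename (⇑σ)) h
  simpa only [map_mul, map_sub, rename_X] using this

lemma rename_swap_swap {n : ℕ} (u v : Fin n) (g : MvPolynomial (Fin n) ℚ) :
    rename (⇑(Equiv.swap u v)) (rename (⇑(Equiv.swap u v)) g) = g := by
  rw [rename_rename]
  have h : (⇑(Equiv.swap u v) ∘ ⇑(Equiv.swap u v)) = id :=
    funext fun x => Equiv.swap_apply_self u v x
  rw [h, rename_id, AlgHom.id_apply]

section triple
variable {n : ℕ} {i j : ℕ}

lemma triple_aux (hi : i + 1 < n) (hj : j + 1 < n) (f : MvPolynomial (Fin n) ℚ)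
    (hsJ : (X (Equiv.swap (⟨i, Nat.lt_of_succ_lt hi⟩ : Fin n) ⟨i + 1, hi⟩ ⟨j, Nat.lt_of_succ_lt hj⟩)
        - X (Equiv.swap (⟨i, Nat.lt_of_succ_lt hi⟩ : Fin n) ⟨i + 1, hi⟩ ⟨j + 1, hj⟩)
        : MvPolynomial (Fin n) ℚ)
      = (X ⟨i, Nat.lt_of_succ_lt hi⟩ - X ⟨i + 1, hi⟩) + (X ⟨j, Nat.lt_of_succ_lt hj⟩ - X ⟨j + 1, hj⟩))
    (htI : (X (Equiv.swap (⟨j, Nat.lt_of_succ_lt hj⟩ : Fin n) ⟨j + 1, hj⟩ ⟨i, Nat.lt_of_succ_lt hi⟩)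
        - X (Equiv.swap (⟨j, Nat.lt_of_succ_lt hj⟩ : Fin n) ⟨j + 1, hj⟩ ⟨i + 1, hi⟩)
        : MvPolynomial (Fin n) ℚ)
      = (X ⟨i, Nat.lt_of_succ_lt hi⟩ - X ⟨i + 1, hi⟩) + (X ⟨j, Nat.lt_of_succ_lt hj⟩ - X ⟨j + 1, hj⟩))
    (hstI : (X (Equiv.swap (⟨i, Nat.lt_of_succ_lt hi⟩ : Fin n) ⟨i + 1, hi⟩
          (Equiv.swap (⟨j, Nat.lt_of_succ_lt hj⟩ : Fin n) ⟨j + 1, hj⟩ ⟨i, Nat.lt_of_succ_lt hi⟩))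
        - X (Equiv.swap (⟨i, Nat.lt_of_succ_lt hi⟩ : Fin n) ⟨i + 1, hi⟩
          (Equiv.swap (⟨j, Nat.lt_of_succ_lt hj⟩ : Fin n) ⟨j + 1, hj⟩ ⟨i + 1, hi⟩))
        : MvPolynomial (Fin n) ℚ)
      = X ⟨j, Nat.lt_of_succ_lt hj⟩ - X ⟨j + 1, hj⟩) :
    ((X ⟨i, Nat.lt_of_succ_lt hi⟩ - X ⟨i + 1, hi⟩) * (X ⟨j, Nat.lt_of_succ_lt hj⟩ - X ⟨j + 1, hj⟩)
      * ((X ⟨i, Nat.lt_of_succ_lt hi⟩ - X ⟨i + 1, hi⟩) + (X ⟨j, Nat.lt_of_succ_lt hj⟩ - X ⟨j + 1, hj⟩))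
      : MvPolynomial (Fin n) ℚ) * divDiff i (divDiff j (divDiff i f))
    = f - rename (⇑(Equiv.swap (⟨i, Nat.lt_of_succ_lt hi⟩ : Fin n) ⟨i + 1, hi⟩)) f
      - rename (⇑(Equiv.swap (⟨j, Nat.lt_of_succ_lt hj⟩ : Fin n) ⟨j + 1, hj⟩)) f
      + rename (⇑(Equiv.swap (⟨j, Nat.lt_of_succ_lt hj⟩ : Fin n) ⟨j + 1, hj⟩))
          (rename (⇑(Equiv.swap (⟨i, Nat.lt_of_succ_lt hi⟩ : Fin n) ⟨i + 1, hi⟩)) f)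
      + rename (⇑(Equiv.swap (⟨i, Nat.lt_of_succ_lt hi⟩ : Fin n) ⟨i + 1, hi⟩))
          (rename (⇑(Equiv.swap (⟨j, Nat.lt_of_succ_lt hj⟩ : Fin n) ⟨j + 1, hj⟩)) f)
      - rename (⇑(Equiv.swap (⟨i, Nat.lt_of_succ_lt hi⟩ : Fin n) ⟨i + 1, hi⟩))
          (rename (⇑(Equiv.swap (⟨j, Nat.lt_of_succ_lt hj⟩ : Fin n) ⟨j + 1, hj⟩))
            (rename (⇑(Equiv.swap (⟨i, Nat.lt_of_succ_lt hi⟩ : Fin n) ⟨i + 1, hi⟩)) f)) := by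
  set ui : Fin n := ⟨i, Nat.lt_of_succ_lt hi⟩
  set vi : Fin n := ⟨i + 1, hi⟩
  set uj : Fin n := ⟨j, Nat.lt_of_succ_lt hj⟩
  set vj : Fin n := ⟨j + 1, hj⟩
  have hne : ui ≠ vi := by simp [ui, vi, Fin.ext_iff]
  have hA := divDiff_spec hi f
  have hB := divDiff_spec hj (divDiff i f)
  have hC := divDiff_spec hi (divDiff j (divDiff i f))
  have hsB := rename_swap_mul_eq (Equiv.swap ui vi) hB
  rw [hsJ] at hsB
  have hsA := rename_swap_mul_eq (Equiv.swap ui vi) hA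
  rw [Equiv.swap_apply_left, Equiv.swap_apply_right, rename_swap_swap] at hsA
  have htA := rename_swap_mul_eq (Equiv.swap uj vj) hA
  have hstA := rename_swap_mul_eq (Equiv.swap ui vi) htA
  rw [htI] at htA
  rw [hstI] at hstA
  refine mul_left_cancel₀ (X_sub_X_ne hne) ?_
  linear_combination ((X ui - X vi) * (X uj - X vj) * ((X ui - X vi) + (X uj - X vj))) * hC
    + ((X ui - X vi) * ((X ui - X vi) + (X uj - X vj))) * hB
    - ((X ui - X vi) * (X uj - X vj)) * hsB
    + ((X ui - X vi) + (X uj - X vj)) * hA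
    + (X uj - X vj) * hsA
    - (X ui - X vi) * htA
    + (X ui - X vi) * hstA
end triple

section comm
variable {n : ℕ} {i j : ℕ}

lemma comm_aux (hi : i + 1 < n) (hj : j + 1 < n) (f : MvPolynomial (Fin n) ℚ)
    (hsJ : (X (Equiv.swap (⟨i, Nat.lt_of_succ_lt hi⟩ : Fin n) ⟨i + 1, hi⟩ ⟨j, Nat.lt_of_succ_lt hj⟩)
        - X (Equiv.swap (⟨i, Nat.lt_of_succ_lt hi⟩ : Fin n) ⟨i + 1, hi⟩ ⟨j + 1, hj⟩)
        : MvPolynomial (Fin n) ℚ)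
      = X ⟨j, Nat.lt_of_succ_lt hj⟩ - X ⟨j + 1, hj⟩) :
    ((X ⟨i, Nat.lt_of_succ_lt hi⟩ - X ⟨i + 1, hi⟩) * (X ⟨j, Nat.lt_of_succ_lt hj⟩ - X ⟨j + 1, hj⟩)
      : MvPolynomial (Fin n) ℚ) * divDiff i (divDiff j f)
    = f - rename (⇑(Equiv.swap (⟨j, Nat.lt_of_succ_lt hj⟩ : Fin n) ⟨j + 1, hj⟩)) f
      - rename (⇑(Equiv.swap (⟨i, Nat.lt_of_succ_lt hi⟩ : Fin n) ⟨i + 1, hi⟩)) f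
      + rename (⇑(Equiv.swap (⟨i, Nat.lt_of_succ_lt hi⟩ : Fin n) ⟨i + 1, hi⟩))
          (rename (⇑(Equiv.swap (⟨j, Nat.lt_of_succ_lt hj⟩ : Fin n) ⟨j + 1, hj⟩)) f) := by
  have hB := divDiff_spec hj f
  have hA := divDiff_spec hi (divDiff j f)
  have hsB := rename_swap_mul_eq (Equiv.swap (⟨i, Nat.lt_of_succ_lt hi⟩ : Fin n) ⟨i + 1, hi⟩) hB
  rw [hsJ] at hsB
  linear_combination (X (⟨j, Nat.lt_of_succ_lt hj⟩ : Fin n) - X ⟨j + 1, hj⟩) * hA + hB - hsB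
end comm

section braidfin
variable {n : ℕ}

lemma braid_divDiff {a : ℕ} (h : a + 2 < n) (f : MvPolynomial (Fin n) ℚ) :
    divDiff a (divDiff (a + 1) (divDiff a f)) = divDiff (a + 1) (divDiff a (divDiff (a + 1) f)) := by
  have hi : a + 1 < n := Nat.lt_of_succ_lt h
  have hj : a + 1 + 1 < n := h
  set u : Fin n := ⟨a, Nat.lt_of_succ_lt hi⟩ with hu
  set v : Fin n := ⟨a + 1, hi⟩ with hv
  set z : Fin n := ⟨a + 1 + 1, hj⟩ with hz
  have huv : u ≠ v := by simp [hu, hv, Fin.ext_iff]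
  have hvz : v ≠ z := by simp [hv, hz, Fin.ext_iff]
  have huz : u ≠ z := by simp [hu, hz, Fin.ext_iff]; omega
  -- the Fin n element ⟨a+1, Nat.lt_of_succ_lt hj⟩ is defeq to v
  have k1 := triple_aux (i := a) (j := a + 1) hi hj f
    (by rw [show (⟨a + 1, Nat.lt_of_succ_lt hj⟩ : Fin n) = v from rfl,
          Equiv.swap_apply_right, Equiv.swap_apply_of_ne_of_ne huz.symm hvz.symm]; try ring)
    (by rw [show (⟨a + 1, Nat.lt_of_succ_lt hj⟩ : Fin n) = v from rfl,
          Equiv.swap_apply_of_ne_of_ne huv huz, Equiv.swap_apply_left]; try ring)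
    (by rw [show (⟨a + 1, Nat.lt_of_succ_lt hj⟩ : Fin n) = v from rfl,
          Equiv.swap_apply_of_ne_of_ne huv huz, Equiv.swap_apply_left,
          Equiv.swap_apply_left,
          Equiv.swap_apply_of_ne_of_ne huz.symm hvz.symm]; try ring)
  have k2 := triple_aux (i := a + 1) (j := a) hj hi f
    (by rw [show (⟨a + 1, Nat.lt_of_succ_lt hj⟩ : Fin n) = v from rfl,
          Equiv.swap_apply_of_ne_of_ne huv huz, Equiv.swap_apply_left]; try ring)
    (by rw [show (⟨a + 1, Nat.lt_of_succ_lt hj⟩ : Fin n) = v from rfl,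
          Equiv.swap_apply_right, Equiv.swap_apply_of_ne_of_ne huz.symm hvz.symm]; try ring)
    (by rw [show (⟨a + 1, Nat.lt_of_succ_lt hj⟩ : Fin n) = v from rfl,
          Equiv.swap_apply_right, Equiv.swap_apply_of_ne_of_ne huz.symm hvz.symm,
          Equiv.swap_apply_of_ne_of_ne huv huz, Equiv.swap_apply_right]; try ring)
  rw [show (⟨a + 1, Nat.lt_of_succ_lt hj⟩ : Fin n) = v from rfl] at k1 k2
  simp only [← hu, ← hz] at k1 k2
  -- braid relation for the swaps
  have hgrp : Equiv.swap u v * Equiv.swap v z * Equiv.swap u v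
      = Equiv.swap v z * Equiv.swap u v * Equiv.swap v z := by
    have h2 : Equiv.swap v z * Equiv.swap u v * Equiv.swap v z = Equiv.swap z u :=
      Equiv.swap_mul_swap_mul_swap huv huz
    have h1 : Equiv.swap u v * Equiv.swap v z * Equiv.swap u v = Equiv.swap u z := by
      rw [Equiv.swap_comm u v, Equiv.swap_comm v z]
      exact Equiv.swap_mul_swap_mul_swap hvz.symm huz.symm
    rw [h1, h2, Equiv.swap_comm]
  have hfun : (⇑(Equiv.swap u v) ∘ ⇑(Equiv.swap v z) ∘ ⇑(Equiv.swap u v))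
      = (⇑(Equiv.swap v z) ∘ ⇑(Equiv.swap u v) ∘ ⇑(Equiv.swap v z)) := by
    funext x
    have := congrArg (fun σ : Equiv.Perm (Fin n) => σ x) hgrp
    simpa [Equiv.Perm.mul_apply] using this
  have hsts : rename (⇑(Equiv.swap u v)) (rename (⇑(Equiv.swap v z)) (rename (⇑(Equiv.swap u v)) f))
      = rename (⇑(Equiv.swap v z)) (rename (⇑(Equiv.swap u v)) (rename (⇑(Equiv.swap v z)) f)) := by
    simp only [rename_rename]
    rw [hfun]
  have hprod : ((X u - X v) * (X v - X z) * ((X u - X v) + (X v - X z))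
      : MvPolynomial (Fin n) ℚ) ≠ 0 := by
    have h3 : ((X u - X v) + (X v - X z) : MvPolynomial (Fin n) ℚ) = X u - X z := by ring
    exact mul_ne_zero (mul_ne_zero (X_sub_X_ne huv) (X_sub_X_ne hvz)) (h3 ▸ X_sub_X_ne huz)
  refine mul_left_cancel₀ hprod ?_
  rw [k1, hsts]
  linear_combination -k2
end braidfin

section commfin
variable {n : ℕ}

lemma comm_divDiff {a b : ℕ} (ha : a + 1 < n) (hb : b + 1 < n) (hab : a + 1 < b)
    (f : MvPolynomial (Fin n) ℚ) :
    divDiff a (divDiff b f) = divDiff b (divDiff a f) := by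
  set u : Fin n := ⟨a, Nat.lt_of_succ_lt ha⟩ with hu
  set v : Fin n := ⟨a + 1, ha⟩ with hv
  set p : Fin n := ⟨b, Nat.lt_of_succ_lt hb⟩ with hp
  set q : Fin n := ⟨b + 1, hb⟩ with hq
  have huv : u ≠ v := by simp only [hu, hv, Ne, Fin.mk.injEq]; omega
  have hpq : p ≠ q := by simp only [hp, hq, Ne, Fin.mk.injEq]; omega
  have hup : u ≠ p := by simp only [hu, hp, Ne, Fin.mk.injEq]; omega
  have huq : u ≠ q := by simp only [hu, hq, Ne, Fin.mk.injEq]; omega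
  have hvp : v ≠ p := by simp only [hv, hp, Ne, Fin.mk.injEq]; omega
  have hvq : v ≠ q := by simp only [hv, hq, Ne, Fin.mk.injEq]; omega
  have k1 := comm_aux (i := a) (j := b) ha hb f
    (by rw [Equiv.swap_apply_of_ne_of_ne hup.symm hvp.symm,
        Equiv.swap_apply_of_ne_of_ne huq.symm hvq.symm])
  have k2 := comm_aux (i := b) (j := a) hb ha f
    (by rw [Equiv.swap_apply_of_ne_of_ne hup huq,
        Equiv.swap_apply_of_ne_of_ne hvp hvq])
  simp only [← hu, ← hv, ← hp, ← hq] at k1 k2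
  have hdis : (Equiv.swap u v).Disjoint (Equiv.swap p q) := by
    intro x
    by_cases hx : x = u ∨ x = v
    · right
      rcases hx with rfl | rfl
      · exact Equiv.swap_apply_of_ne_of_ne hup huq
      · exact Equiv.swap_apply_of_ne_of_ne hvp hvq
    · left
      push_neg at hx
      exact Equiv.swap_apply_of_ne_of_ne hx.1 hx.2
  have hgrp : Equiv.swap u v * Equiv.swap p q = Equiv.swap p q * Equiv.swap u v := hdis.commute
  have hfun : (⇑(Equiv.swap u v) ∘ ⇑(Equiv.swap p q)) = (⇑(Equiv.swap p q) ∘ ⇑(Equiv.swap u v)) := by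
    funext x
    have := congrArg (fun σ : Equiv.Perm (Fin n) => σ x) hgrp
    simpa [Equiv.Perm.mul_apply] using this
  have hst : rename (⇑(Equiv.swap u v)) (rename (⇑(Equiv.swap p q)) f)
      = rename (⇑(Equiv.swap p q)) (rename (⇑(Equiv.swap u v)) f) := by
    simp only [rename_rename]
    rw [hfun]
  have hprod : ((X u - X v) * (X p - X q) : MvPolynomial (Fin n) ℚ) ≠ 0 :=
    mul_ne_zero (X_sub_X_ne huv) (X_sub_X_ne hpq)
  refine mul_left_cancel₀ hprod ?_
  rw [k1, hst]
  linear_combination -k2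
end commfin

lemma sAdj_eq {n a : ℕ} (h : a + 1 < n) :
    sAdj n a = Equiv.swap ⟨a, Nat.lt_of_succ_lt h⟩ ⟨a + 1, h⟩ := by
  rw [sAdj, dif_pos h]

lemma sAdj_mul_self {n a : ℕ} (h : a + 1 < n) : sAdj n a * sAdj n a = 1 := by
  rw [sAdj_eq h, Equiv.swap_mul_self]

lemma swap_val {n a : ℕ} (h : a + 1 < n) (x : Fin n) :
    ((Equiv.swap (⟨a, Nat.lt_of_succ_lt h⟩ : Fin n) ⟨a + 1, h⟩ x : Fin n) : ℕ)
      = if (x : ℕ) = a then a + 1 else if (x : ℕ) = a + 1 then a else x := by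
  rcases eq_or_ne x ⟨a, Nat.lt_of_succ_lt h⟩ with rfl | hx
  · rw [Equiv.swap_apply_left]; simp
  · rcases eq_or_ne x ⟨a + 1, h⟩ with rfl | hx2
    · rw [Equiv.swap_apply_right]; simp
    · rw [Equiv.swap_apply_of_ne_of_ne hx hx2]
      have h1 : (x : ℕ) ≠ a := fun hc => hx (Fin.ext hc)
      have h2 : (x : ℕ) ≠ a + 1 := fun hc => hx2 (Fin.ext hc)
      rw [if_neg h1, if_neg h2]

lemma swap_lt_swap_iff {n a : ℕ} (h : a + 1 < n) {x y : Fin n} :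
    Equiv.swap (⟨a, Nat.lt_of_succ_lt h⟩ : Fin n) ⟨a + 1, h⟩ x
      < Equiv.swap (⟨a, Nat.lt_of_succ_lt h⟩ : Fin n) ⟨a + 1, h⟩ y
    ↔ ((x < y ∧ ¬((x : ℕ) = a ∧ (y : ℕ) = a + 1)) ∨ ((x : ℕ) = a + 1 ∧ (y : ℕ) = a)) := by
  rw [Fin.lt_def, Fin.lt_def, swap_val h, swap_val h]
  split_ifs <;> omega

lemma lengthPerm_asc {n a : ℕ} (h : a + 1 < n) (w : Equiv.Perm (Fin n))
    (hw : w⁻¹ ⟨a, Nat.lt_of_succ_lt h⟩ < w⁻¹ ⟨a + 1, h⟩) :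
    lengthPerm (sAdj n a * w) = lengthPerm w + 1 := by
  set u : Fin n := ⟨a, Nat.lt_of_succ_lt h⟩ with hu
  set v : Fin n := ⟨a + 1, h⟩ with hv
  rw [sAdj_eq h, ← hu, ← hv]
  unfold lengthPerm
  have hins : (Finset.univ.filter
      (fun p : Fin n × Fin n => p.1 < p.2 ∧ (Equiv.swap u v * w) p.2 < (Equiv.swap u v * w) p.1))
      = insert (w⁻¹ u, w⁻¹ v) (Finset.univ.filter
        (fun p : Fin n × Fin n => p.1 < p.2 ∧ w p.2 < w p.1)) := by
    ext ⟨i, j⟩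
    simp only [Finset.mem_insert, Finset.mem_filter, Finset.mem_univ, true_and,
      Prod.mk.injEq]
    simp only [Equiv.Perm.mul_apply]
    rw [swap_lt_swap_iff h]
    constructor
    · rintro ⟨hij, ⟨hlt, -⟩ | ⟨h1, h2⟩⟩
      · exact Or.inr ⟨hij, hlt⟩
      · refine Or.inl ⟨?_, ?_⟩
        · have : w i = u := Fin.ext h2
          rw [← this, Equiv.Perm.inv_apply_self]
        · have : w j = v := Fin.ext h1
          rw [← this, Equiv.Perm.inv_apply_self]
    · rintro (⟨rfl, rfl⟩ | ⟨hij, hlt⟩)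
      · refine ⟨hw, Or.inr ⟨?_, ?_⟩⟩
        · rw [Equiv.Perm.apply_inv_self]
        · rw [Equiv.Perm.apply_inv_self]
      · refine ⟨hij, Or.inl ⟨hlt, ?_⟩⟩
        rintro ⟨h1, h2⟩
        have hj : j = w⁻¹ u := by rw [← Fin.ext h1 (b := u), Equiv.Perm.inv_apply_self]
        have hi : i = w⁻¹ v := by rw [← Fin.ext h2 (b := v), Equiv.Perm.inv_apply_self]
        rw [hi, hj] at hij
        exact absurd hw (not_lt.mpr hij.le)
  rw [hins, Finset.card_insert_of_notMem]
  simp only [Finset.mem_filter, Finset.mem_univ, true_and, not_and,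
    Equiv.Perm.apply_inv_self]
  intro _
  simp only [hu, hv, Fin.lt_def, Fin.val_mk]
  omega

lemma sAdj_inv_apply {n a : ℕ} (h : a + 1 < n) (w : Equiv.Perm (Fin n)) (x : Fin n) :
    (sAdj n a * w)⁻¹ x = w⁻¹ (Equiv.swap (⟨a, Nat.lt_of_succ_lt h⟩ : Fin n) ⟨a + 1, h⟩ x) := by
  rw [sAdj_eq h, mul_inv_rev, Equiv.Perm.mul_apply, Equiv.swap_inv]

lemma lengthPerm_desc {n a : ℕ} (h : a + 1 < n) (w : Equiv.Perm (Fin n))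
    (hw : w⁻¹ ⟨a + 1, h⟩ < w⁻¹ ⟨a, Nat.lt_of_succ_lt h⟩) :
    lengthPerm w = lengthPerm (sAdj n a * w) + 1 := by
  have key := lengthPerm_asc h (sAdj n a * w) ?_
  · rw [← mul_assoc, sAdj_mul_self h, one_mul] at key
    exact key
  · rw [sAdj_inv_apply h, sAdj_inv_apply h, Equiv.swap_apply_left, Equiv.swap_apply_right]
    exact hw

lemma lengthPerm_trichotomy {n a : ℕ} (h : a + 1 < n) (w : Equiv.Perm (Fin n)) :
    (w⁻¹ ⟨a, Nat.lt_of_succ_lt h⟩ < w⁻¹ ⟨a + 1, h⟩ ∧ lengthPerm (sAdj n a * w) = lengthPerm w + 1)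
    ∨ (w⁻¹ ⟨a + 1, h⟩ < w⁻¹ ⟨a, Nat.lt_of_succ_lt h⟩
        ∧ lengthPerm w = lengthPerm (sAdj n a * w) + 1) := by
  have hne : w⁻¹ ⟨a, Nat.lt_of_succ_lt h⟩ ≠ w⁻¹ ⟨a + 1, h⟩ := by
    intro hc
    have h2 : a = a + 1 := by simpa [Fin.ext_iff] using w⁻¹.injective hc
    omega
  rcases lt_or_gt_of_ne hne with hlt | hgt
  · exact Or.inl ⟨hlt, lengthPerm_asc h w hlt⟩
  · exact Or.inr ⟨hgt, lengthPerm_desc h w hgt⟩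

lemma lengthPerm_le_length {n : ℕ} : ∀ L : List ℕ, (∀ a ∈ L, a + 1 < n) →
    lengthPerm ((L.map (sAdj n)).prod) ≤ L.length := by
  intro L
  induction L with
  | nil =>
      intro _
      simp only [List.map_nil, List.prod_nil, List.length_nil, Nat.le_zero]
      rw [lengthPerm, Finset.card_eq_zero, Finset.filter_eq_empty_iff]
      rintro ⟨i, j⟩ _
      simp only [Equiv.Perm.one_apply, not_and]
      exact fun hij => not_lt.mpr hij.le
  | cons a T ih =>
      intro hv
      have ha : a + 1 < n := hv a List.mem_cons_self
      have hT := ih (fun b hb => hv b (List.mem_cons_of_mem a hb))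
      simp only [List.map_cons, List.prod_cons, List.length_cons]
      rcases lengthPerm_trichotomy ha ((T.map (sAdj n)).prod) with ⟨-, he⟩ | ⟨-, he⟩
      · omega
      · omega

lemma perm_strictMono_eq_one {n : ℕ} {w : Equiv.Perm (Fin n)} (hm : StrictMono ⇑w) : w = 1 := by
  have hinv : StrictMono ⇑w⁻¹ := by
    intro x y hxy
    rcases lt_trichotomy (w⁻¹ x) (w⁻¹ y) with h | h | h
    · exact h
    · cases w⁻¹.injective h
      exact absurd hxy (lt_irrefl _)
    · have := hm h
      rw [Equiv.Perm.apply_inv_self, Equiv.Perm.apply_inv_self] at this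
      exact absurd hxy (not_lt.mpr this.le)
  ext x
  haveI : WellFoundedLT (Fin n) := inferInstance
  have h1 : x ≤ w x := hm.le_apply (x := x)
  have h2 : w x ≤ w⁻¹ (w x) := hinv.le_apply (x := w x)
  rw [Equiv.Perm.inv_apply_self] at h2
  simp only [Equiv.Perm.one_apply]
  exact congrArg Fin.val (le_antisymm h2 h1)

lemma exists_descent {n : ℕ} {w : Equiv.Perm (Fin n)} (hw : w ≠ 1) :
    ∃ a : ℕ, ∃ h : a + 1 < n,
      w⁻¹ ⟨a + 1, h⟩ < w⁻¹ ⟨a, Nat.lt_of_succ_lt h⟩ := by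
  by_contra hc
  push_neg at hc
  apply hw
  have hinv : w⁻¹ = 1 := by
    apply perm_strictMono_eq_one
    cases n with
    | zero => intro x; exact absurd x.isLt (by omega)
    | succ m =>
        rw [Fin.strictMono_iff_lt_succ]
        intro i
        have hi : (i : ℕ) + 1 < m + 1 := by omega
        have hle := hc (i : ℕ) hi
        have hcast : Fin.castSucc i = (⟨(i : ℕ), Nat.lt_of_succ_lt hi⟩ : Fin (m + 1)) := rfl
        have hsucc : i.succ = (⟨(i : ℕ) + 1, hi⟩ : Fin (m + 1)) := rfl
        rw [hcast, hsucc]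
        refine lt_of_le_of_ne hle ?_
        intro hcc
        have h2 : (i : ℕ) = (i : ℕ) + 1 := by simpa [Fin.ext_iff] using w⁻¹.injective hcc
        omega
  calc w = (w⁻¹)⁻¹ := by rw [inv_inv]
  _ = 1 := by rw [hinv]; rfl

lemma lengthPerm_eq_zero {n : ℕ} {w : Equiv.Perm (Fin n)} (hw : lengthPerm w = 0) : w = 1 := by
  by_contra hne
  obtain ⟨a, h, hd⟩ := exists_descent hne
  have := lengthPerm_desc h w hd
  omega

lemma lengthPerm_one {n : ℕ} : lengthPerm (1 : Equiv.Perm (Fin n)) = 0 := by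
  rw [lengthPerm, Finset.card_eq_zero, Finset.filter_eq_empty_iff]
  rintro ⟨i, j⟩ _
  simp only [Equiv.Perm.one_apply, not_and]
  exact fun hij => not_lt.mpr hij.le

lemma reduced_cons {n : ℕ} {w : Equiv.Perm (Fin n)} {a : ℕ} {T : List ℕ}
    (h : IsReducedWord n w (a :: T)) :
    ∃ ha : a + 1 < n, IsReducedWord n (sAdj n a * w) T ∧
      w⁻¹ ⟨a + 1, ha⟩ < w⁻¹ ⟨a, Nat.lt_of_succ_lt ha⟩ := by
  obtain ⟨hvalid, hprod, hlen⟩ := h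
  have ha : a + 1 < n := hvalid a List.mem_cons_self
  have hTprod : (T.map (sAdj n)).prod = sAdj n a * w := by
    rw [List.map_cons, List.prod_cons] at hprod
    rw [← hprod, ← mul_assoc, sAdj_mul_self ha, one_mul]
  have hTvalid : ∀ b ∈ T, b + 1 < n := fun b hb => hvalid b (List.mem_cons_of_mem a hb)
  have hTle : lengthPerm (sAdj n a * w) ≤ T.length := by
    rw [← hTprod]; exact lengthPerm_le_length T hTvalid
  rw [List.length_cons] at hlen
  rcases lengthPerm_trichotomy ha w with ⟨-, he⟩ | ⟨hgt, he⟩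
  · omega
  · exact ⟨ha, ⟨hTvalid, hTprod, by omega⟩, hgt⟩

lemma reduced_cons_of {n : ℕ} {w : Equiv.Perm (Fin n)} {a : ℕ} {T : List ℕ} (ha : a + 1 < n)
    (hd : w⁻¹ ⟨a + 1, ha⟩ < w⁻¹ ⟨a, Nat.lt_of_succ_lt ha⟩)
    (hT : IsReducedWord n (sAdj n a * w) T) : IsReducedWord n w (a :: T) := by
  obtain ⟨hvalid, hprod, hlen⟩ := hT
  refine ⟨?_, ?_, ?_⟩
  · intro b hb
    rcases List.mem_cons.mp hb with rfl | hb'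
    · exact ha
    · exact hvalid b hb'
  · rw [List.map_cons, List.prod_cons, hprod, ← mul_assoc, sAdj_mul_self ha, one_mul]
  · rw [List.length_cons, hlen, ← lengthPerm_desc ha w hd]

lemma exists_reduced {n : ℕ} : ∀ (k : ℕ) (w : Equiv.Perm (Fin n)), lengthPerm w = k →
    ∃ L, IsReducedWord n w L := by
  intro k
  induction k using Nat.strong_induction_on with
  | _ k ih =>
    intro w hw
    rcases eq_or_ne w 1 with rfl | hne
    · exact ⟨[], fun b hb => absurd hb List.not_mem_nil, by simp, by simp [lengthPerm_one]⟩
    · obtain ⟨a, ha, hd⟩ := exists_descent hne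
      have he := lengthPerm_desc ha w hd
      obtain ⟨L, hL⟩ := ih (lengthPerm (sAdj n a * w)) (by omega) (sAdj n a * w) rfl
      exact ⟨a :: L, reduced_cons_of ha hd hL⟩

lemma swap_mk_apply {n a : ℕ} (h : a + 1 < n) (x : ℕ) (hx : x < n) :
    Equiv.swap (⟨a, Nat.lt_of_succ_lt h⟩ : Fin n) ⟨a + 1, h⟩ ⟨x, hx⟩
      = if x = a then ⟨a + 1, h⟩ else if x = a + 1 then ⟨a, Nat.lt_of_succ_lt h⟩
        else ⟨x, hx⟩ := by
  apply Fin.ext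
  rw [swap_val h]
  split_ifs <;> rfl

lemma sAdj_braid {n a : ℕ} (h : a + 2 < n) :
    sAdj n a * sAdj n (a + 1) * sAdj n a = sAdj n (a + 1) * sAdj n a * sAdj n (a + 1) := by
  have hi : a + 1 < n := Nat.lt_of_succ_lt h
  have hj : a + 1 + 1 < n := h
  rw [sAdj_eq hi, sAdj_eq hj]
  set u : Fin n := ⟨a, Nat.lt_of_succ_lt hi⟩ with hu
  set v : Fin n := ⟨a + 1, hi⟩ with hv
  set z : Fin n := ⟨a + 1 + 1, hj⟩ with hz
  have huv : u ≠ v := by simp only [hu, hv, Ne, Fin.mk.injEq]; omega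
  have hvz : v ≠ z := by simp only [hv, hz, Ne, Fin.mk.injEq]; omega
  have huz : u ≠ z := by simp only [hu, hz, Ne, Fin.mk.injEq]; omega
  have h2 : Equiv.swap v z * Equiv.swap u v * Equiv.swap v z = Equiv.swap z u :=
    Equiv.swap_mul_swap_mul_swap huv huz
  have h1 : Equiv.swap u v * Equiv.swap v z * Equiv.swap u v = Equiv.swap u z := by
    rw [Equiv.swap_comm u v, Equiv.swap_comm v z]
    exact Equiv.swap_mul_swap_mul_swap hvz.symm huz.symm
  rw [h1, h2, Equiv.swap_comm]

lemma sAdj_comm {n a b : ℕ} (ha : a + 1 < n) (hb : b + 1 < n) (hab : a + 1 < b) :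
    sAdj n a * sAdj n b = sAdj n b * sAdj n a := by
  rw [sAdj_eq ha, sAdj_eq hb]
  set u : Fin n := ⟨a, Nat.lt_of_succ_lt ha⟩ with hu
  set v : Fin n := ⟨a + 1, ha⟩ with hv
  set p : Fin n := ⟨b, Nat.lt_of_succ_lt hb⟩ with hp
  set q : Fin n := ⟨b + 1, hb⟩ with hq
  have hup : u ≠ p := by simp only [hu, hp, Ne, Fin.mk.injEq]; omega
  have huq : u ≠ q := by simp only [hu, hq, Ne, Fin.mk.injEq]; omega
  have hvp : v ≠ p := by simp only [hv, hp, Ne, Fin.mk.injEq]; omega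
  have hvq : v ≠ q := by simp only [hv, hq, Ne, Fin.mk.injEq]; omega
  have hdis : (Equiv.swap u v).Disjoint (Equiv.swap p q) := by
    intro x
    by_cases hx : x = u ∨ x = v
    · right
      rcases hx with rfl | rfl
      · exact Equiv.swap_apply_of_ne_of_ne hup huq
      · exact Equiv.swap_apply_of_ne_of_ne hvp hvq
    · left
      push_neg at hx
      exact Equiv.swap_apply_of_ne_of_ne hx.1 hx.2
  exact hdis.commute

lemma sAdj_inv_mk {n c : ℕ} (hc : c + 1 < n) (u : Equiv.Perm (Fin n)) {x y : ℕ}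
    (hx : x < n) (hy : y < n)
    (hxy : (x = c ∧ y = c + 1) ∨ (x = c + 1 ∧ y = c) ∨ (x ≠ c ∧ x ≠ c + 1 ∧ y = x)) :
    (sAdj n c * u)⁻¹ ⟨x, hx⟩ = u⁻¹ ⟨y, hy⟩ := by
  rw [sAdj_inv_apply hc, swap_mk_apply hc]
  congr 1
  rcases hxy with ⟨rfl, rfl⟩ | ⟨rfl, rfl⟩ | ⟨h1, h2, rfl⟩
  · rw [if_pos rfl]
  · rw [if_neg (by omega), if_pos rfl]
  · rw [if_neg h1, if_neg h2]

lemma step_lemma {n : ℕ} {p : ℕ}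
    (IH : ∀ (w : Equiv.Perm (Fin n)) (L₁ L₂ : List ℕ), IsReducedWord n w L₁ →
      IsReducedWord n w L₂ → L₁.length = p →
      ∀ f : MvPolynomial (Fin n) ℚ, L₁.foldr divDiff f = L₂.foldr divDiff f)
    {w : Equiv.Perm (Fin n)} {a b : ℕ} (ha : a + 1 < n) (hb : b + 1 < n) (hab : a < b)
    (hda : w⁻¹ ⟨a + 1, ha⟩ < w⁻¹ ⟨a, Nat.lt_of_succ_lt ha⟩)
    (hdb : w⁻¹ ⟨b + 1, hb⟩ < w⁻¹ ⟨b, Nat.lt_of_succ_lt hb⟩)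
    {T₁ T₂ : List ℕ} (hT₁ : IsReducedWord n (sAdj n a * w) T₁)
    (hT₂ : IsReducedWord n (sAdj n b * w) T₂) (hl₁ : T₁.length = p)
    (f : MvPolynomial (Fin n) ℚ) :
    divDiff a (T₁.foldr divDiff f) = divDiff b (T₂.foldr divDiff f) := by
  have heqa := lengthPerm_desc ha w hda
  have heqb := lengthPerm_desc hb w hdb
  have el₁ := hT₁.2.2
  have el₂ := hT₂.2.2
  by_cases hb1 : b = a + 1
  · subst hb1
    -- braid case
    have h2 : a + 2 < n := hb
    have hd1 : (sAdj n a * w)⁻¹ ⟨a + 1 + 1, hb⟩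
        < (sAdj n a * w)⁻¹ ⟨a + 1, Nat.lt_of_succ_lt hb⟩ := by
      rw [sAdj_inv_mk ha w hb hb (Or.inr (Or.inr ⟨by omega, by omega, rfl⟩)),
        sAdj_inv_mk ha w (Nat.lt_of_succ_lt hb) (Nat.lt_of_succ_lt ha)
          (Or.inr (Or.inl ⟨rfl, rfl⟩))]
      exact lt_trans hdb hda
    have hd2 : (sAdj n (a + 1) * (sAdj n a * w))⁻¹ ⟨a + 1, ha⟩
        < (sAdj n (a + 1) * (sAdj n a * w))⁻¹ ⟨a, Nat.lt_of_succ_lt ha⟩ := by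
      rw [sAdj_inv_mk hb (sAdj n a * w) ha hb (Or.inl ⟨rfl, rfl⟩),
        sAdj_inv_mk hb (sAdj n a * w) (Nat.lt_of_succ_lt ha) (Nat.lt_of_succ_lt ha)
          (Or.inr (Or.inr ⟨by omega, by omega, rfl⟩)),
        sAdj_inv_mk ha w hb hb (Or.inr (Or.inr ⟨by omega, by omega, rfl⟩)),
        sAdj_inv_mk ha w (Nat.lt_of_succ_lt ha) ha (Or.inl ⟨rfl, rfl⟩)]
      exact hdb
    have hd1' : (sAdj n (a + 1) * w)⁻¹ ⟨a + 1, ha⟩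
        < (sAdj n (a + 1) * w)⁻¹ ⟨a, Nat.lt_of_succ_lt ha⟩ := by
      rw [sAdj_inv_mk hb w ha hb (Or.inl ⟨rfl, rfl⟩),
        sAdj_inv_mk hb w (Nat.lt_of_succ_lt ha) (Nat.lt_of_succ_lt ha)
          (Or.inr (Or.inr ⟨by omega, by omega, rfl⟩))]
      exact lt_trans hdb hda
    have hd2' : (sAdj n a * (sAdj n (a + 1) * w))⁻¹ ⟨a + 1 + 1, hb⟩
        < (sAdj n a * (sAdj n (a + 1) * w))⁻¹ ⟨a + 1, Nat.lt_of_succ_lt hb⟩ := by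
      rw [sAdj_inv_mk ha (sAdj n (a + 1) * w) hb hb
          (Or.inr (Or.inr ⟨by omega, by omega, rfl⟩)),
        sAdj_inv_mk ha (sAdj n (a + 1) * w) (Nat.lt_of_succ_lt hb) (Nat.lt_of_succ_lt ha)
          (Or.inr (Or.inl ⟨rfl, rfl⟩)),
        sAdj_inv_mk hb w hb (Nat.lt_of_succ_lt hb) (Or.inr (Or.inl ⟨rfl, rfl⟩)),
        sAdj_inv_mk hb w (Nat.lt_of_succ_lt ha) (Nat.lt_of_succ_lt ha)
          (Or.inr (Or.inr ⟨by omega, by omega, rfl⟩))]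
      exact hda
    obtain ⟨R, hR⟩ := exists_reduced
      (lengthPerm (sAdj n a * (sAdj n (a + 1) * (sAdj n a * w))))
      (sAdj n a * (sAdj n (a + 1) * (sAdj n a * w))) rfl
    have hM₁ : IsReducedWord n (sAdj n a * w) ((a + 1) :: a :: R) :=
      reduced_cons_of hb hd1 (reduced_cons_of ha hd2 hR)
    have hvv : sAdj n (a + 1) * (sAdj n a * (sAdj n (a + 1) * w))
        = sAdj n a * (sAdj n (a + 1) * (sAdj n a * w)) := by
      simp only [← mul_assoc]
      rw [sAdj_braid h2]
    have hM₂ : IsReducedWord n (sAdj n (a + 1) * w) (a :: (a + 1) :: R) :=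
      reduced_cons_of ha hd1' (reduced_cons_of hb hd2' (by rw [hvv]; exact hR))
    have hlM₂ : (a :: (a + 1) :: R).length = p := by
      have := hM₂.2.2; omega
    calc divDiff a (T₁.foldr divDiff f)
        = divDiff a (((a + 1) :: a :: R).foldr divDiff f) := by
          rw [IH (sAdj n a * w) T₁ ((a + 1) :: a :: R) hT₁ hM₁ hl₁ f]
      _ = divDiff a (divDiff (a + 1) (divDiff a (R.foldr divDiff f))) := rfl
      _ = divDiff (a + 1) (divDiff a (divDiff (a + 1) (R.foldr divDiff f))) :=
          braid_divDiff h2 _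
      _ = divDiff (a + 1) ((a :: (a + 1) :: R).foldr divDiff f) := rfl
      _ = divDiff (a + 1) (T₂.foldr divDiff f) := by
          rw [IH (sAdj n (a + 1) * w) (a :: (a + 1) :: R) T₂ hM₂ hT₂ hlM₂ f]
  · -- commuting case
    have hab' : a + 1 < b := by omega
    have hd1 : (sAdj n a * w)⁻¹ ⟨b + 1, hb⟩
        < (sAdj n a * w)⁻¹ ⟨b, Nat.lt_of_succ_lt hb⟩ := by
      rw [sAdj_inv_mk ha w hb hb (Or.inr (Or.inr ⟨by omega, by omega, rfl⟩)),
        sAdj_inv_mk ha w (Nat.lt_of_succ_lt hb) (Nat.lt_of_succ_lt hb)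
          (Or.inr (Or.inr ⟨by omega, by omega, rfl⟩))]
      exact hdb
    have hd1' : (sAdj n b * w)⁻¹ ⟨a + 1, ha⟩
        < (sAdj n b * w)⁻¹ ⟨a, Nat.lt_of_succ_lt ha⟩ := by
      rw [sAdj_inv_mk hb w ha ha (Or.inr (Or.inr ⟨by omega, by omega, rfl⟩)),
        sAdj_inv_mk hb w (Nat.lt_of_succ_lt ha) (Nat.lt_of_succ_lt ha)
          (Or.inr (Or.inr ⟨by omega, by omega, rfl⟩))]
      exact hda
    obtain ⟨R, hR⟩ := exists_reduced (lengthPerm (sAdj n b * (sAdj n a * w)))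
      (sAdj n b * (sAdj n a * w)) rfl
    have hM₁ : IsReducedWord n (sAdj n a * w) (b :: R) := reduced_cons_of hb hd1 hR
    have hvv : sAdj n a * (sAdj n b * w) = sAdj n b * (sAdj n a * w) := by
      simp only [← mul_assoc]
      rw [sAdj_comm ha hb hab']
    have hM₂ : IsReducedWord n (sAdj n b * w) (a :: R) :=
      reduced_cons_of ha hd1' (by rw [hvv]; exact hR)
    have hlM₂ : (a :: R).length = p := by
      have := hM₂.2.2; omega
    calc divDiff a (T₁.foldr divDiff f)
        = divDiff a ((b :: R).foldr divDiff f) := by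
          rw [IH (sAdj n a * w) T₁ (b :: R) hT₁ hM₁ hl₁ f]
      _ = divDiff a (divDiff b (R.foldr divDiff f)) := rfl
      _ = divDiff b (divDiff a (R.foldr divDiff f)) := comm_divDiff ha hb hab' _
      _ = divDiff b ((a :: R).foldr divDiff f) := rfl
      _ = divDiff b (T₂.foldr divDiff f) := by
          rw [IH (sAdj n b * w) (a :: R) T₂ hM₂ hT₂ hlM₂ f]

lemma well_def_aux {n : ℕ} : ∀ (p : ℕ) (w : Equiv.Perm (Fin n)) (L₁ L₂ : List ℕ),
    IsReducedWord n w L₁ → IsReducedWord n w L₂ → L₁.length = p →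
    ∀ f : MvPolynomial (Fin n) ℚ, L₁.foldr divDiff f = L₂.foldr divDiff f := by
  intro p
  induction p with
  | zero =>
      intro w L₁ L₂ h₁ h₂ hlen f
      have e1 := h₁.2.2
      have e2 := h₂.2.2
      obtain rfl := List.length_eq_zero_iff.mp hlen
      obtain rfl := List.length_eq_zero_iff.mp (by omega : L₂.length = 0)
      rfl
  | succ p IH =>
      intro w L₁ L₂ h₁ h₂ hlen f
      cases L₁ with
      | nil => simp at hlen
      | cons a T₁ =>
        cases L₂ with
        | nil =>
            exfalso
            have e1 := h₁.2.2
            have e2 := h₂.2.2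
            simp only [List.length_nil, List.length_cons] at e1 e2
            omega
        | cons b T₂ =>
            obtain ⟨ha, hT₁, hda⟩ := reduced_cons h₁
            obtain ⟨hb, hT₂, hdb⟩ := reduced_cons h₂
            have hl₁ : T₁.length = p := by
              simp only [List.length_cons] at hlen; omega
            rcases Nat.lt_trichotomy a b with h | rfl | h
            · exact step_lemma IH ha hb h hda hdb hT₁ hT₂ hl₁ f
            · show divDiff a (T₁.foldr divDiff f) = divDiff a (T₂.foldr divDiff f)
              rw [IH (sAdj n a * w) T₁ T₂ hT₁ hT₂ hl₁ f]
            · have hl₂ : T₂.length = p := by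
                have e1 := hT₁.2.2
                have e2 := hT₂.2.2
                have d1 := lengthPerm_desc ha w hda
                have d2 := lengthPerm_desc hb w hdb
                omega
              exact (step_lemma IH hb ha h hdb hda hT₂ hT₁ hl₂ f).symm

theorem divDiff_word_well_defined (n : ℕ) (w : Equiv.Perm (Fin n)) (L₁ L₂ : List ℕ)
    (h₁ : IsReducedWord n w L₁) (h₂ : IsReducedWord n w L₂)
    (f : MvPolynomial (Fin n) ℚ) :
    L₁.foldr divDiff f = L₂.foldr divDiff f :=
  well_def_aux L₁.length w L₁ L₂ h₁ h₂ rfl f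
end

section
/- Let r, m be positive integers. Every cell (i,j) of every rc-graph D ∈ RC(σ[r,m]) has row index i ≤ r, and the map sending D ∈ RC(σ[r,m]) to the tuple (k₁,...,k_r), where k_s is the number of cells of D in row s, is a bijection from RC(σ[r,m]) onto the set {(k₁,...,k_r) ∈ ℕ^r : k₁ + ... + k_r = m}. In particular, an rc-graph of σ[r,m] is uniquely determined by specifying the number of its crossings in each of the rows 1,...,r. -/
open MvPolynomial

/-- The length ℓ(w) of a (finitely supported) permutation of the positive integers:
the number of inversions. -/
noncomputable def plength (w : Equiv.Perm ℕ+) : ℕ :=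
  Set.ncard {p : ℕ+ × ℕ+ | p.1 < p.2 ∧ w p.2 < w p.1}

/-- The simple reflection sᵢ = t_{i,i+1}. -/
def sP (i : ℕ+) : Equiv.Perm ℕ+ := Equiv.swap i (i + 1)

/-- A reduced word for w: a list of positive letters whose simple reflections multiply
(in order) to w, of length ℓ(w). -/
def IsReducedWordP (w : Equiv.Perm ℕ+) (L : List ℕ+) : Prop :=
  (L.map sP).prod = w ∧ L.length = plength w

/-- The reading order on cells: increasing row index and, within a row, decreasing
column index. -/
def cellOrd (p q : ℕ+ × ℕ+) : Prop := p.1 < q.1 ∨ (p.1 = q.1 ∧ q.2 ≤ p.2)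

instance : DecidableRel cellOrd := fun p q => by unfold cellOrd; infer_instance

instance : IsTrans (ℕ+ × ℕ+) cellOrd := ⟨by
  rintro a b c (h | ⟨h1, h2⟩) (h' | ⟨h1', h2'⟩)
  · exact Or.inl (h.trans h')
  · exact Or.inl (lt_of_lt_of_le h (le_of_eq h1'))
  · exact Or.inl (lt_of_le_of_lt (le_of_eq h1) h')
  · exact Or.inr ⟨h1.trans h1', h2'.trans h2⟩⟩

instance : IsAntisymm (ℕ+ × ℕ+) cellOrd := ⟨by
  rintro a b (h | ⟨h1, h2⟩) (h' | ⟨h1', h2'⟩)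
  · exact absurd h' (not_lt.mpr h.le)
  · exact absurd h (by rw [h1']; exact lt_irrefl _)
  · exact absurd h' (by rw [h1]; exact lt_irrefl _)
  · exact Prod.ext h1 (le_antisymm h2' h2)⟩

instance : IsTotal (ℕ+ × ℕ+) cellOrd := ⟨fun a b => by
  rcases lt_trichotomy a.1 b.1 with h | h | h
  · exact Or.inl (Or.inl h)
  · rcases le_total b.2 a.2 with h2 | h2
    · exact Or.inl (Or.inr ⟨h, h2⟩)
    · exact Or.inr (Or.inr ⟨h.symm, h2⟩)
  · exact Or.inr (Or.inl h)⟩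

/-- The reading word of a finite set of cells: read the cells in order of increasing
row index and, within each row, decreasing column index; the cell (i,j) gives the
letter i + j − 1. -/
def rcWord (D : Finset (ℕ+ × ℕ+)) : List ℕ+ :=
  (D.sort cellOrd).map fun p => p.1 + p.2 - 1

/-- D is an rc-graph for w if its reading word is a reduced word for w. -/
def IsRCGraph (w : Equiv.Perm ℕ+) (D : Finset (ℕ+ × ℕ+)) : Prop :=
  IsReducedWordP w (rcWord D)

/-- The set RC(w) of rc-graphs for w. -/
def RCset (w : Equiv.Perm ℕ+) : Set (Finset (ℕ+ × ℕ+)) := {D | IsRCGraph w D}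

/-- The monomial x^D = ∏_{(i,j) ∈ D} xᵢ. -/
noncomputable def xD (D : Finset (ℕ+ × ℕ+)) : MvPolynomial ℕ+ ℤ :=
  ∏ p ∈ D, X p.1

/-- The number of cells of D in row s. -/
def rowCount (D : Finset (ℕ+ × ℕ+)) (s : ℕ+) : ℕ :=
  (D.filter fun p => p.1 = s).card

def InvSet (w : Equiv.Perm ℕ+) : Set (ℕ+ × ℕ+) := {p | p.1 < p.2 ∧ w p.2 < w p.1}

lemma plength_eq (w : Equiv.Perm ℕ+) : plength w = (InvSet w).ncard := rfl

lemma plt {a b : ℕ+} : a < b ↔ (a:ℕ) < (b:ℕ) := (PNat.coe_lt_coe a b).symm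
lemma ple {a b : ℕ+} : a ≤ b ↔ (a:ℕ) ≤ (b:ℕ) := (PNat.coe_le_coe a b).symm
lemma peq {a b : ℕ+} : a = b ↔ (a:ℕ) = (b:ℕ) := PNat.coe_inj.symm
lemma pne {a b : ℕ+} (h : a ≠ b) : (a:ℕ) ≠ (b:ℕ) := fun hh => h (peq.mpr hh)

lemma swap_lt {a i j : ℕ+} (hij : i < j) (hne : ¬(i = a ∧ j = a + 1)) :
    Equiv.swap a (a+1) i < Equiv.swap a (a+1) j := by
  rcases eq_or_ne i a with hia | hia
  · rcases eq_or_ne j (a+1) with hja | hja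
    · exact absurd ⟨hia, hja⟩ hne
    · have hja2 : j ≠ a := by rintro rfl; exact lt_irrefl _ (hia ▸ hij)
      rw [hia, Equiv.swap_apply_left, Equiv.swap_apply_of_ne_of_ne hja2 hja]
      have h1 := pne hja; have h2 := pne hja2; rw [peq] at hia
      rw [plt]; rw [plt] at hij; push_cast at *; omega
  · rcases eq_or_ne i (a+1) with hia1 | hia1
    · rw [peq] at hia1; rw [plt] at hij
      have hja : j ≠ a := by rw [Ne, peq]; push_cast at *; omega
      have hja1 : j ≠ a + 1 := by rw [Ne, peq]; push_cast at *; omega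
      have hi : i = a + 1 := by rw [peq]; exact hia1
      rw [hi, Equiv.swap_apply_right, Equiv.swap_apply_of_ne_of_ne hja hja1]
      rw [plt]; push_cast at *; omega
    · rw [Equiv.swap_apply_of_ne_of_ne hia hia1]
      rcases eq_or_ne j a with hja | hja
      · rw [hja, Equiv.swap_apply_left]
        have h1 := pne hia; have h2 := pne hia1; rw [peq] at hja; rw [plt] at hij
        rw [plt]; push_cast at *; omega
      · rcases eq_or_ne j (a+1) with hja1 | hja1
        · rw [hja1, Equiv.swap_apply_right]
          have h1 := pne hia; have h2 := pne hia1; rw [peq] at hja1; rw [plt] at hij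
          rw [plt]; push_cast at *; omega
        · rw [Equiv.swap_apply_of_ne_of_ne hja hja1]; exact hij

lemma sP_mul_apply (w : Equiv.Perm ℕ+) (a x : ℕ+) : (w * sP a) x = w (Equiv.swap a (a+1) x) := rfl

lemma sP_sq (a : ℕ+) : sP a * sP a = 1 := by
  rw [sP, Equiv.swap_mul_self]

lemma a_lt_a1 (a : ℕ+) : a < a + 1 := by rw [plt]; push_cast; omega

lemma exchange (w : Equiv.Perm ℕ+) (a : ℕ+) (hfin : (InvSet w).Finite) :
    (InvSet (w * sP a)).Finite ∧
    (w a < w (a+1) → plength (w * sP a) = plength w + 1) ∧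
    (w (a+1) < w a → plength w = plength (w * sP a) + 1) := by
  classical
  set T := Equiv.swap a (a+1) with hT
  set G : ℕ+ × ℕ+ → ℕ+ × ℕ+ := fun p => (T p.1, T p.2) with hG
  set c : ℕ+ × ℕ+ := (a, a+1) with hc
  have hTT : ∀ x, T (T x) = x := fun x => Equiv.swap_apply_self _ _ x
  have hGc : ∀ p : ℕ+ × ℕ+, p.1 < p.2 → p ≠ c → (G p).1 < (G p).2 ∧ G p ≠ c ∧ G (G p) = p := by
    intro p h1 h2
    have hlt : T p.1 < T p.2 := swap_lt h1 (by
      rintro ⟨u, v⟩; exact h2 (Prod.ext u v))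
    refine ⟨hlt, ?_, by simp [hG, hTT]⟩
    intro hcc
    have h1' : T p.1 = a := congrArg Prod.fst hcc
    have h2' : T p.2 = a + 1 := congrArg Prod.snd hcc
    have : p.1 = T a := by rw [← h1', hTT]
    have hp2 : p.2 = T (a+1) := by rw [← h2', hTT]
    rw [Equiv.swap_apply_left] at this
    rw [Equiv.swap_apply_right] at hp2
    rw [this, hp2] at h1
    exact absurd h1 (not_lt.mpr (a_lt_a1 a).le)
  have hmemIff : ∀ p : ℕ+ × ℕ+, p.1 < p.2 → p ≠ c → (p ∈ InvSet (w * sP a) ↔ G p ∈ InvSet w) := by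
    intro p h1 h2
    obtain ⟨hlt, -, -⟩ := hGc p h1 h2
    constructor
    · rintro ⟨-, hinv⟩
      exact ⟨hlt, by simpa [sP_mul_apply, hT] using hinv⟩
    · rintro ⟨-, hinv⟩
      exact ⟨h1, by simpa [sP_mul_apply, hT] using hinv⟩
  set A : Set (ℕ+ × ℕ+) := InvSet (w * sP a) \ {c} with hA
  set B : Set (ℕ+ × ℕ+) := InvSet w \ {c} with hB
  have hmapsAB : Set.MapsTo G A B := by
    rintro p ⟨hp, hpc⟩
    have h1 : p.1 < p.2 := hp.1
    have hpc' : p ≠ c := hpc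
    obtain ⟨-, hGne, -⟩ := hGc p h1 hpc'
    exact ⟨(hmemIff p h1 hpc').mp hp, hGne⟩
  have hmapsBA : Set.MapsTo G B A := by
    rintro q ⟨hq, hqc⟩
    have h1 : q.1 < q.2 := hq.1
    have hqc' : q ≠ c := hqc
    obtain ⟨hlt, hGne, hGG⟩ := hGc q h1 hqc'
    refine ⟨(hmemIff (G q) hlt hGne).mpr ?_, hGne⟩
    rw [hGG]; exact hq
  have hAB : A = G '' B := by
    apply Set.Subset.antisymm
    · rintro p ⟨hp, hpc⟩
      obtain ⟨-, -, hGG⟩ := hGc p hp.1 hpc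
      exact ⟨G p, hmapsAB ⟨hp, hpc⟩, hGG⟩
    · rintro p ⟨q, hq, rfl⟩
      exact hmapsBA hq
  have hBA : B = G '' A := by
    apply Set.Subset.antisymm
    · rintro q ⟨hq, hqc⟩
      obtain ⟨-, -, hGG⟩ := hGc q hq.1 hqc
      exact ⟨G q, hmapsBA ⟨hq, hqc⟩, hGG⟩
    · rintro q ⟨p, hp, rfl⟩
      exact hmapsAB hp
  have hBfin : B.Finite := hfin.subset Set.diff_subset
  have hAfin : A.Finite := by rw [hAB]; exact hBfin.image G
  have hInjA : Set.InjOn G A := by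
    rintro p ⟨hp, hpc⟩ q ⟨hq, hqc⟩ hpq
    obtain ⟨-, -, hGGp⟩ := hGc p hp.1 hpc
    obtain ⟨-, -, hGGq⟩ := hGc q hq.1 hqc
    rw [← hGGp, hpq, hGGq]
  have hcard : A.ncard = B.ncard := by
    rw [hBA]
    exact (Set.ncard_image_of_injOn hInjA).symm
  have hfinWT : (InvSet (w * sP a)).Finite := by
    have : InvSet (w * sP a) ⊆ insert c A := by
      intro p hp
      by_cases h : p = c
      · exact Or.inl h
      · exact Or.inr ⟨hp, h⟩
    exact (hAfin.insert c).subset this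
  refine ⟨hfinWT, ?_, ?_⟩
  · intro hlt
    have hcin : c ∈ InvSet (w * sP a) := by
      refine ⟨a_lt_a1 a, ?_⟩
      show (w * sP a) (a+1) < (w * sP a) a
      rw [sP_mul_apply, sP_mul_apply, Equiv.swap_apply_right, Equiv.swap_apply_left]
      exact hlt
    have hcout : c ∉ InvSet w := by
      rintro ⟨-, h2⟩
      exact absurd hlt (not_lt.mpr h2.le)
    have e1 : InvSet (w * sP a) = insert c A := by
      rw [hA, Set.insert_diff_singleton, Set.insert_eq_self.mpr hcin]
    have e2 : B = InvSet w := by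
      rw [hB, Set.diff_singleton_eq_self hcout]
    rw [plength_eq, plength_eq, e1, ← e2, ← hcard,
      Set.ncard_insert_of_notMem (fun h => h.2 rfl) hAfin]
  · intro hlt
    have hcin : c ∈ InvSet w := ⟨a_lt_a1 a, hlt⟩
    have hcout : c ∉ InvSet (w * sP a) := by
      rintro ⟨-, h2⟩
      revert h2
      show ¬ ((w * sP a) (a+1) < (w * sP a) a)
      rw [sP_mul_apply, sP_mul_apply, Equiv.swap_apply_right, Equiv.swap_apply_left]
      exact not_lt.mpr hlt.le
    have e1 : InvSet w = insert c B := by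
      rw [hB, Set.insert_diff_singleton, Set.insert_eq_self.mpr hcin]
    have e2 : A = InvSet (w * sP a) := by
      rw [hA, Set.diff_singleton_eq_self hcout]
    rw [plength_eq, plength_eq, e1, ← e2, hcard,
      Set.ncard_insert_of_notMem (fun h => h.2 rfl) hBfin]

lemma invSet_one : InvSet (1 : Equiv.Perm ℕ+) = ∅ := by
  ext p
  simp only [InvSet, Set.mem_setOf_eq, Set.mem_empty_iff_false, iff_false, not_and]
  intro h
  exact not_lt.mpr h.le

lemma prod_facts (L : List ℕ+) :
    (InvSet ((L.map sP).prod)).Finite ∧ plength ((L.map sP).prod) ≤ L.length := by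
  induction L using List.reverseRecOn with
  | nil => simp [invSet_one, plength_eq]
  | append_singleton L a ih =>
    obtain ⟨hfin, hle⟩ := ih
    set w := (L.map sP).prod with hw
    have hprod : ((L ++ [a]).map sP).prod = w * sP a := by
      simp [hw]
    rw [hprod, List.length_append]
    have hone : ([a] : List ℕ+).length = 1 := rfl
    rw [hone]
    obtain ⟨hfin', h1, h2⟩ := exchange w a hfin
    refine ⟨hfin', ?_⟩
    rcases lt_trichotomy (w a) (w (a+1)) with h | h | h
    · rw [h1 h]; omega
    · exact absurd (w.injective h) (by
        intro hh
        have := congrArg (fun x : ℕ+ => (x:ℕ)) hh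
        push_cast at this; omega)
    · have := h2 h; omega

lemma last_step (σ : Equiv.Perm ℕ+) (L' : List ℕ+) (a : ℕ+)
    (hp : ((L' ++ [a]).map sP).prod = σ) (hl : (L' ++ [a]).length = plength σ) :
    σ (a+1) < σ a ∧ (L'.map sP).prod = σ * sP a ∧ L'.length = plength (σ * sP a) := by
  set w := (L'.map sP).prod with hw
  have hprod : w * sP a = σ := by
    rw [hw, ← hp]; simp
  obtain ⟨hfin, hle⟩ := prod_facts L'
  rw [← hw] at hfin hle
  rw [List.length_append] at hl
  have hone : ([a] : List ℕ+).length = 1 := rfl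
  rw [hone] at hl
  obtain ⟨-, h1, h2⟩ := exchange w a hfin
  have hsa : σ a = w (a+1) := by rw [← hprod, sP_mul_apply, Equiv.swap_apply_left]
  have hsa1 : σ (a+1) = w a := by rw [← hprod, sP_mul_apply, Equiv.swap_apply_right]
  have hws : σ * sP a = w := by
    rw [← hprod, mul_assoc, sP_sq, mul_one]
  rcases lt_trichotomy (w a) (w (a+1)) with h | h | h
  · have := h1 h
    rw [hprod] at this
    refine ⟨by rw [hsa, hsa1]; exact h, by rw [hws], ?_⟩
    rw [hws]
    omega
  · exact absurd (w.injective h) (by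
      intro hh
      have := congrArg (fun x : ℕ+ => (x:ℕ)) hh
      push_cast at this; omega)
  · have := h2 h
    rw [hprod] at this
    omega

def Sig (r : ℕ+) (n : ℕ) (σ : Equiv.Perm ℕ+) : Prop :=
  (∀ i : ℕ+, i < r → σ i = i) ∧ ((σ r : ℕ) = (r:ℕ) + n) ∧
  (∀ j : ℕ+, r < j → (j:ℕ) ≤ (r:ℕ) + n → σ j + 1 = j) ∧
  (∀ j : ℕ+, (r:ℕ) + n < (j:ℕ) → σ j = j)

lemma sig_val {r : ℕ+} {n : ℕ} {σ : Equiv.Perm ℕ+} (h : Sig r n σ) (x : ℕ+) :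
    (σ x : ℕ) = if (x:ℕ) < r then (x:ℕ) else if (x:ℕ) = r then (r:ℕ) + n
      else if (x:ℕ) ≤ (r:ℕ) + n then (x:ℕ) - 1 else (x:ℕ) := by
  obtain ⟨h1, h2, h3, h4⟩ := h
  rcases lt_trichotomy (x:ℕ) (r:ℕ) with hx | hx | hx
  · rw [if_pos hx, h1 x (plt.mpr hx)]
  · have : x = r := peq.mpr hx
    rw [if_neg (by omega), if_pos hx, this, h2]
  · rw [if_neg (by omega), if_neg (by omega)]
    rcases le_or_gt (x:ℕ) ((r:ℕ) + n) with hx2 | hx2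
    · rw [if_pos hx2]
      have := h3 x (plt.mpr hx) hx2
      have := congrArg (fun y : ℕ+ => (y:ℕ)) this
      push_cast at this
      omega
    · rw [if_neg (by omega), h4 x hx2]

lemma sig_unique {r : ℕ+} {n : ℕ} {σ τ : Equiv.Perm ℕ+} (hσ : Sig r n σ) (hτ : Sig r n τ) :
    σ = τ := by
  ext x
  have h1 := sig_val hσ x
  have h2 := sig_val hτ x
  exact peq.mpr (h1.trans h2.symm)

lemma sig_invSet {r : ℕ+} {n : ℕ} {σ : Equiv.Perm ℕ+} (h : Sig r n σ) :
    InvSet σ = (fun t : ℕ => ((r : ℕ+), (⟨(r:ℕ) + t + 1, by omega⟩ : ℕ+))) '' {t : ℕ | t < n} := by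
  ext p
  simp only [InvSet, Set.mem_setOf_eq, Set.mem_image]
  have e1 := sig_val h p.1
  have e2 := sig_val h p.2
  have hr1 : 1 ≤ (r:ℕ) := r.2
  have hp1 : 1 ≤ (p.1:ℕ) := p.1.2
  have hp2 : 1 ≤ (p.2:ℕ) := p.2.2
  constructor
  · rintro ⟨hlt, hinv⟩
    rw [plt] at hlt hinv
    have key : (p.1:ℕ) = r ∧ (p.2:ℕ) ≤ (r:ℕ) + n ∧ (p.2:ℕ) - (r:ℕ) - 1 < n := by
      split_ifs at e1 e2 <;> omega
    refine ⟨(p.2:ℕ) - (r:ℕ) - 1, key.2.2, Prod.ext (peq.mpr key.1.symm) (peq.mpr ?_)⟩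
    show (r:ℕ) + ((p.2:ℕ) - (r:ℕ) - 1) + 1 = (p.2:ℕ)
    omega
  · rintro ⟨t, ht, hpe⟩
    have h1 : (p.1:ℕ) = r := by rw [← hpe]
    have h2 : (p.2:ℕ) = (r:ℕ) + t + 1 := by rw [← hpe]; rfl
    refine ⟨plt.mpr (by omega), plt.mpr ?_⟩
    rw [Set.mem_setOf_eq] at ht
    split_ifs at e1 e2 <;> omega

lemma sig_finite {r : ℕ+} {n : ℕ} {σ : Equiv.Perm ℕ+} (h : Sig r n σ) : (InvSet σ).Finite := by
  rw [sig_invSet h]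
  exact (Set.finite_Iio n).image _

lemma sig_plength {r : ℕ+} {n : ℕ} {σ : Equiv.Perm ℕ+} (h : Sig r n σ) : plength σ = n := by
  rw [plength_eq, sig_invSet h]
  have hinj : Function.Injective (fun t : ℕ => ((r : ℕ+), (⟨(r:ℕ) + t + 1, by omega⟩ : ℕ+))) := by
    intro s t hst
    have h3 : (r:ℕ) + s + 1 = (r:ℕ) + t + 1 := congrArg (fun q : ℕ+ × ℕ+ => (q.2 : ℕ)) hst
    omega
  refine (Set.ncard_image_of_injective _ hinj).trans ?_
  have : {t : ℕ | t < n} = ↑(Finset.range n) := by ext t; simp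
  rw [this, Set.ncard_coe_finset, Finset.card_range]

def padd (r : ℕ+) (n : ℕ) : ℕ+ := ⟨(r:ℕ) + n, Nat.lt_of_lt_of_le r.2 (Nat.le_add_right _ _)⟩

lemma padd_coe (r : ℕ+) (n : ℕ) : ((padd r n : ℕ+) : ℕ) = (r:ℕ) + n := rfl

def wordRM (r : ℕ+) : ℕ → List ℕ+
  | 0 => []
  | n+1 => padd r n :: wordRM r n

lemma wordRM_length (r : ℕ+) (n : ℕ) : (wordRM r n).length = n := by
  induction n with
  | zero => rfl
  | succ n ih => simp [wordRM, ih]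

lemma wordRM_concat (r : ℕ+) (n : ℕ) : wordRM r (n+1) = wordRM (r+1) n ++ [r] := by
  induction n with
  | zero =>
    have e : padd r 0 = r := peq.mpr (Nat.add_zero _)
    show [padd r 0] = [r]
    rw [e]
  | succ n ih =>
    show padd r (n+1) :: wordRM r (n+1) = (padd (r+1) n :: wordRM (r+1) n) ++ [r]
    rw [List.cons_append, ← ih]
    congr 1
    rw [peq, padd_coe, padd_coe]
    push_cast
    omega

lemma wordRM_mem {r a : ℕ+} {n : ℕ} (h : a ∈ wordRM r n) : r ≤ a ∧ (a:ℕ) < (r:ℕ) + n := by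
  induction n with
  | zero => exact absurd h List.not_mem_nil
  | succ n ih =>
    rcases List.mem_cons.mp h with h1 | h1
    · subst h1
      exact ⟨ple.mpr (by rw [padd_coe]; omega), by rw [padd_coe]; omega⟩
    · obtain ⟨u, v⟩ := ih h1
      exact ⟨u, by omega⟩

lemma wordRM_getLast (r : ℕ+) (n : ℕ) (hn : n ≠ 0) (h : wordRM r n ≠ []) :
    (wordRM r n).getLast h = r := by
  obtain ⟨n', rfl⟩ := Nat.exists_eq_succ_of_ne_zero hn
  have hc := wordRM_concat r n'
  rw [List.getLast_congr h (by simp) hc]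
  exact List.getLast_append_singleton _

lemma sig_one (r : ℕ+) : Sig r 0 1 := by
  refine ⟨fun i _ => rfl, by simp, fun j h1 h2 => ?_, fun j _ => rfl⟩
  rw [plt] at h1
  omega

lemma sig_succ_step {r : ℕ+} {n : ℕ} {τ : Equiv.Perm ℕ+} (h : Sig (r+1) n τ) :
    Sig r (n+1) (τ * sP r) := by
  obtain ⟨h1, h2, h3, h4⟩ := h
  have hr1 : ((r+1 : ℕ+) : ℕ) = (r:ℕ) + 1 := by push_cast; rfl
  have happ : ∀ x : ℕ+, (τ * sP r) x = τ (Equiv.swap r (r+1) x) := fun x => rfl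
  refine ⟨?_, ?_, ?_, ?_⟩
  · intro i hi
    rw [plt] at hi
    have hi1 : i ≠ r := by rw [Ne, peq]; omega
    have hi2 : i ≠ r + 1 := by rw [Ne, peq]; rw [hr1]; omega
    rw [happ, Equiv.swap_apply_of_ne_of_ne hi1 hi2]
    exact h1 i (plt.mpr (by rw [hr1]; omega))
  · rw [happ, Equiv.swap_apply_left, h2, hr1]
    omega
  · intro j hj1 hj2
    rw [plt] at hj1
    rcases eq_or_ne (j:ℕ) ((r:ℕ)+1) with he | he
    · have : j = r + 1 := by rw [peq, hr1]; exact he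
      rw [this, happ, Equiv.swap_apply_right]
      have h5 : τ r = r := h1 r (plt.mpr (by rw [hr1]; omega))
      rw [h5]
    · have hj3 : j ≠ r := by rw [Ne, peq]; omega
      have hj4 : j ≠ r + 1 := by rw [Ne, peq, hr1]; omega
      rw [happ, Equiv.swap_apply_of_ne_of_ne hj3 hj4]
      exact h3 j (plt.mpr (by rw [hr1]; omega)) (by rw [hr1]; omega)
  · intro j hj
    have hj3 : j ≠ r := by rw [Ne, peq]; omega
    have hj4 : j ≠ r + 1 := by rw [Ne, peq, hr1]; omega
    rw [happ, Equiv.swap_apply_of_ne_of_ne hj3 hj4]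
    exact h4 j (by rw [hr1]; omega)

lemma sig_prod : ∀ (n : ℕ) (r : ℕ+), Sig r n ((wordRM r n).map sP).prod := by
  intro n
  induction n with
  | zero => intro r; exact sig_one r
  | succ n ih =>
    intro r
    have hc := wordRM_concat r n
    rw [hc, List.map_append, List.prod_append]
    simp only [List.map_cons, List.map_nil, List.prod_cons, List.prod_nil, mul_one]
    exact sig_succ_step (ih (r+1))

lemma descent_is_r {r : ℕ+} {n : ℕ} {σ : Equiv.Perm ℕ+} (h : Sig r n σ) (hn : n ≠ 0)
    {a : ℕ+} (hd : σ (a+1) < σ a) : a = r := by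
  have e1 := sig_val h a
  have e2 := sig_val h (a+1)
  have ha1 : ((a+1:ℕ+):ℕ) = (a:ℕ) + 1 := by push_cast; rfl
  rw [plt, e1, e2, ha1] at hd
  have hr1 : 1 ≤ (r:ℕ) := r.2
  have hp1 : 1 ≤ (a:ℕ) := a.2
  rw [peq]
  split_ifs at hd <;> omega

lemma sig_step_down {r : ℕ+} {n : ℕ} {σ : Equiv.Perm ℕ+} (h : Sig r (n+1) σ) :
    Sig (r+1) n (σ * sP r) := by
  obtain ⟨h1, h2, h3, h4⟩ := h
  have hr1 : ((r+1 : ℕ+) : ℕ) = (r:ℕ) + 1 := by push_cast; rfl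
  have happ : ∀ x : ℕ+, (σ * sP r) x = σ (Equiv.swap r (r+1) x) := fun x => rfl
  refine ⟨?_, ?_, ?_, ?_⟩
  · intro i hi
    rw [plt, hr1] at hi
    rcases eq_or_ne (i:ℕ) (r:ℕ) with he | he
    · have hir : i = r := peq.mpr he
      subst hir
      rw [happ, Equiv.swap_apply_left]
      have := h3 (i+1) (plt.mpr (by push_cast; omega)) (by push_cast; omega)
      have h6 : σ (i+1) + 1 = i + 1 := this
      exact add_right_cancel h6
    · have hi1 : i ≠ r := fun hh => he (peq.mp hh)
      have hi2 : i ≠ r + 1 := by rw [Ne, peq, hr1]; omega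
      rw [happ, Equiv.swap_apply_of_ne_of_ne hi1 hi2]
      exact h1 i (plt.mpr (by omega))
  · rw [happ, Equiv.swap_apply_right, h2, hr1]
    omega
  · intro j hj1 hj2
    rw [plt, hr1] at hj1
    rw [hr1] at hj2
    have hj3 : j ≠ r := by rw [Ne, peq]; omega
    have hj4 : j ≠ r + 1 := by rw [Ne, peq, hr1]; omega
    rw [happ, Equiv.swap_apply_of_ne_of_ne hj3 hj4]
    exact h3 j (plt.mpr (by omega)) (by omega)
  · intro j hj
    rw [hr1] at hj
    have hj3 : j ≠ r := by rw [Ne, peq]; omega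
    have hj4 : j ≠ r + 1 := by rw [Ne, peq, hr1]; omega
    rw [happ, Equiv.swap_apply_of_ne_of_ne hj3 hj4]
    exact h4 j (by omega)

lemma uniqueWord : ∀ (n : ℕ) (r : ℕ+) (σ : Equiv.Perm ℕ+), Sig r n σ →
    ∀ L : List ℕ+, (L.map sP).prod = σ → L.length = n → L = wordRM r n := by
  intro n
  induction n with
  | zero =>
    intro r σ hσ L hp hl
    exact List.eq_nil_of_length_eq_zero hl
  | succ n ih =>
    intro r σ hσ L hp hl
    have hL : L ≠ [] := by
      intro hnil
      rw [hnil] at hl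
      simp at hl
    obtain ⟨L', a, rfl⟩ := (List.eq_nil_or_concat' L).resolve_left hL
    have hlen : (L' ++ [a]).length = plength σ := by
      rw [sig_plength hσ]; exact hl
    obtain ⟨hdesc, hprod', hlen'⟩ := last_step σ L' a hp hlen
    have har : a = r := descent_is_r hσ (Nat.succ_ne_zero n) hdesc
    subst har
    have hsig' : Sig (a+1) n (σ * sP a) := sig_step_down hσ
    have hlen'' : L'.length = n := by
      rw [hlen', sig_plength hsig']
    have := ih (a+1) (σ * sP a) hsig' L' hprod' hlen''
    rw [this, ← wordRM_concat]


lemma letter_coe (p : ℕ+ × ℕ+) : ((p.1 + p.2 - 1 : ℕ+) : ℕ) = (p.1:ℕ) + (p.2:ℕ) - 1 := by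
  have h1 : (1:ℕ+) < p.1 + p.2 := by
    rw [plt]
    push_cast
    have h2 : 1 ≤ (p.1:ℕ) := p.1.2
    have h3 : 1 ≤ (p.2:ℕ) := p.2.2
    omega
  rw [PNat.sub_coe, if_pos h1]
  push_cast
  rfl

lemma cellOrd_refl (p : ℕ+ × ℕ+) : cellOrd p p := Or.inr ⟨rfl, le_rfl⟩

lemma rcWord_length (D : Finset (ℕ+ × ℕ+)) : (rcWord D).length = D.card := by
  rw [rcWord, List.length_map, Finset.length_sort]

lemma sorted_rel_getLast {l : List (ℕ+ × ℕ+)} (hl : l.Pairwise cellOrd) (h : l ≠ [])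
    {p : ℕ+ × ℕ+} (hp : p ∈ l) : cellOrd p (l.getLast h) := by
  induction l with
  | nil => exact absurd rfl h
  | cons x t ih =>
    cases t with
    | nil =>
      rw [List.mem_singleton] at hp
      subst hp
      rw [List.getLast_singleton]
      exact cellOrd_refl p
    | cons y t' =>
      rw [List.getLast_cons (List.cons_ne_nil y t')]
      rcases List.mem_cons.mp hp with h1 | h1
      · subst h1
        exact List.rel_of_pairwise_cons hl (List.getLast_mem _)
      · exact ih hl.of_cons (List.cons_ne_nil y t') h1

lemma mem_head_min (D : Finset (ℕ+ × ℕ+)) (h : D.Nonempty) :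
    ∃ p ∈ D, (∀ q ∈ D, cellOrd p q) ∧
      D.sort cellOrd = p :: (D.erase p).sort cellOrd := by
  classical
  have hne : D.sort cellOrd ≠ [] := by
    intro hh
    have hl : D.card = 0 := by
      rw [← Finset.length_sort (s := D) cellOrd, hh]
      rfl
    exact h.card_pos.ne' hl
  obtain ⟨p, t, ht⟩ := List.exists_cons_of_ne_nil hne
  have hpD : p ∈ D := by
    rw [← Finset.mem_sort cellOrd, ht]
    exact List.mem_cons_self
  have hsorted := Finset.pairwise_sort D cellOrd
  rw [ht] at hsorted
  have hmin : ∀ q ∈ D, cellOrd p q := by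
    intro q hq
    rw [← Finset.mem_sort cellOrd, ht, List.mem_cons] at hq
    rcases hq with h1 | h1
    · subst h1; exact cellOrd_refl q
    · exact List.rel_of_pairwise_cons hsorted h1
  refine ⟨p, hpD, hmin, ?_⟩
  set E := D.erase p with hE
  have hie : insert p E = D := Finset.insert_erase hpD
  rw [← hie, Finset.sort_insert cellOrd
    (fun b hb => hmin b (hie ▸ Finset.mem_insert_of_mem hb)) (Finset.notMem_erase p D)]

lemma rcWord_head (D : Finset (ℕ+ × ℕ+)) (p : ℕ+ × ℕ+) (hp : p ∈ D)
    (hmin : ∀ q ∈ D, cellOrd p q) :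
    rcWord D = (p.1 + p.2 - 1) :: rcWord (D.erase p) := by
  classical
  rw [rcWord, rcWord]
  set E := D.erase p with hE
  have hie : insert p E = D := Finset.insert_erase hp
  rw [← hie, Finset.sort_insert cellOrd
    (fun b hb => hmin b (hie ▸ Finset.mem_insert_of_mem hb)) (Finset.notMem_erase p D),
    List.map_cons]

lemma rcWord_mem_letter {D : Finset (ℕ+ × ℕ+)} {p : ℕ+ × ℕ+} (hp : p ∈ D) :
    (p.1 + p.2 - 1) ∈ rcWord D := by
  rw [rcWord]
  exact List.mem_map_of_mem ((Finset.mem_sort cellOrd).mpr hp)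

lemma row_bound {r : ℕ+} {n : ℕ} {D : Finset (ℕ+ × ℕ+)} (hw : rcWord D = wordRM r n)
    {p : ℕ+ × ℕ+} (hp : p ∈ D) : p.1 ≤ r := by
  have hpS : p ∈ D.sort cellOrd := (Finset.mem_sort cellOrd).mpr hp
  have hSne : D.sort cellOrd ≠ [] := List.ne_nil_of_mem hpS
  set q := (D.sort cellOrd).getLast hSne with hq
  have hcq : cellOrd p q := sorted_rel_getLast (Finset.pairwise_sort D cellOrd) hSne hpS
  have hn0 : n ≠ 0 := by
    intro h0
    rw [h0] at hw
    exact hSne (List.map_eq_nil_iff.mp hw)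
  have hwne : rcWord D ≠ [] := by
    rw [rcWord]
    intro hh
    exact hSne (List.map_eq_nil_iff.mp hh)
  have hlast : (rcWord D).getLast hwne = q.1 + q.2 - 1 := by
    have := List.getLast_map (f := fun p : ℕ+ × ℕ+ => p.1 + p.2 - 1) (l := D.sort cellOrd) hwne
    exact this
  have hlr : (rcWord D).getLast hwne = r := by
    rw [List.getLast_congr hwne (hw ▸ hwne) hw]
    exact wordRM_getLast r n hn0 _
  have hqr : (q.1:ℕ) + (q.2:ℕ) - 1 = (r:ℕ) := by
    rw [← letter_coe, ← hlast, hlr]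
  have hq2 : 1 ≤ (q.2:ℕ) := q.2.2
  have hp1q : (p.1:ℕ) ≤ (q.1:ℕ) := by
    rcases hcq with h1 | ⟨h1, -⟩
    · exact (plt.mp h1).le
    · exact le_of_eq (peq.mp h1)
  rw [ple]
  omega

lemma rowCount_insert {D : Finset (ℕ+ × ℕ+)} {p : ℕ+ × ℕ+} (hp : p ∉ D) (s : ℕ+) :
    rowCount (insert p D) s = rowCount D s + (if p.1 = s then 1 else 0) := by
  classical
  rw [rowCount, rowCount, Finset.filter_insert]
  split_ifs with h
  · rw [Finset.card_insert_of_notMem (fun hh => hp (Finset.mem_filter.mp hh).1)]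
  · rw [Nat.add_zero]

lemma rowCount_pos_iff {D : Finset (ℕ+ × ℕ+)} {s : ℕ+} :
    rowCount D s ≠ 0 ↔ ∃ q ∈ D, q.1 = s := by
  classical
  rw [rowCount, Ne, Finset.card_eq_zero, ← Ne, ← Finset.nonempty_iff_ne_empty]
  constructor
  · rintro ⟨q, hq⟩
    obtain ⟨h1, h2⟩ := Finset.mem_filter.mp hq
    exact ⟨q, h1, h2⟩
  · rintro ⟨q, h1, h2⟩
    exact ⟨q, Finset.mem_filter.mpr ⟨h1, h2⟩⟩

lemma finsum_rowCount (D : Finset (ℕ+ × ℕ+)) : ∑ᶠ s, rowCount D s = D.card := by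
  classical
  have hsupp : (Function.support fun s => rowCount D s) ⊆ ↑(D.image Prod.fst) := by
    intro s hs
    obtain ⟨q, hq, hq2⟩ := rowCount_pos_iff.mp hs
    exact Finset.mem_coe.mpr (Finset.mem_image.mpr ⟨q, hq, hq2⟩)
  rw [finsum_eq_finset_sum_of_support_subset _ hsupp]
  exact (Finset.card_eq_sum_card_image Prod.fst D).symm

lemma word_inj : ∀ (n : ℕ) (r : ℕ+) (D E : Finset (ℕ+ × ℕ+)),
    rcWord D = wordRM r n → rcWord E = wordRM r n →
    (∀ s, rowCount D s = rowCount E s) → D = E := by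
  intro n
  induction n with
  | zero =>
    intro r D E hD hE _
    have h1 : D.card = 0 := by rw [← rcWord_length, hD]; rfl
    have h2 : E.card = 0 := by rw [← rcWord_length, hE]; rfl
    rw [Finset.card_eq_zero.mp h1, Finset.card_eq_zero.mp h2]
  | succ n ih =>
    intro r D E hD hE hk
    classical
    have hDne : D.Nonempty := by
      rw [← Finset.card_pos, ← rcWord_length, hD, wordRM_length]
      omega
    have hEne : E.Nonempty := by
      rw [← Finset.card_pos, ← rcWord_length, hE, wordRM_length]
      omega
    obtain ⟨p, hpD, hpmin, -⟩ := mem_head_min D hDne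
    obtain ⟨q, hqE, hqmin, -⟩ := mem_head_min E hEne
    have hDw := rcWord_head D p hpD hpmin
    have hEw := rcWord_head E q hqE hqmin
    rw [hD] at hDw
    rw [hE] at hEw
    have hDw' : wordRM r (n+1) = (p.1+p.2-1) :: rcWord (D.erase p) := hDw
    have hEw' : wordRM r (n+1) = (q.1+q.2-1) :: rcWord (E.erase q) := hEw
    rw [show wordRM r (n+1) = padd r n :: wordRM r n from rfl] at hDw' hEw'
    obtain ⟨hpl, hDrest⟩ := List.cons_eq_cons.mp hDw'.symm
    obtain ⟨hql, hErest⟩ := List.cons_eq_cons.mp hEw'.symm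
    -- p.1 = q.1
    have hp1q1 : p.1 = q.1 := by
      have h1 : rowCount D p.1 ≠ 0 := rowCount_pos_iff.mpr ⟨p, hpD, rfl⟩
      have h2 : rowCount E q.1 ≠ 0 := rowCount_pos_iff.mpr ⟨q, hqE, rfl⟩
      have h1' : rowCount E p.1 ≠ 0 := by rw [← hk]; exact h1
      have h2' : rowCount D q.1 ≠ 0 := by rw [hk]; exact h2
      obtain ⟨u, huE, hu1⟩ := rowCount_pos_iff.mp h1'
      obtain ⟨v, hvD, hv1⟩ := rowCount_pos_iff.mp h2'
      have hqu : q.1 ≤ p.1 := by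
        rcases hqmin u huE with hh | ⟨hh, -⟩
        · exact hu1 ▸ hh.le
        · exact hu1 ▸ hh.le
      have hpv : p.1 ≤ q.1 := by
        rcases hpmin v hvD with hh | ⟨hh, -⟩
        · exact hv1 ▸ hh.le
        · exact hv1 ▸ hh.le
      exact le_antisymm hpv hqu
    have hpq : p = q := by
      refine Prod.ext hp1q1 (peq.mpr ?_)
      have e1 := congrArg (fun x : ℕ+ => (x:ℕ)) hpl
      have e2 := congrArg (fun x : ℕ+ => (x:ℕ)) hql
      simp only [letter_coe, padd_coe] at e1 e2
      have := peq.mp hp1q1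
      have hp2 : 1 ≤ (p.2:ℕ) := p.2.2
      have hq2 : 1 ≤ (q.2:ℕ) := q.2.2
      have hp1 : 1 ≤ (p.1:ℕ) := p.1.2
      omega
    subst hpq
    have hkrest : ∀ s, rowCount (D.erase p) s = rowCount (E.erase p) s := by
      intro s
      have hD2 : rowCount D s = rowCount (D.erase p) s + (if p.1 = s then 1 else 0) := by
        rw [← rowCount_insert (Finset.notMem_erase p D) s, Finset.insert_erase hpD]
      have hE2 : rowCount E s = rowCount (E.erase p) s + (if p.1 = s then 1 else 0) := by
        rw [← rowCount_insert (Finset.notMem_erase p E) s, Finset.insert_erase hqE]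
      have := hk s
      omega
    have := ih r (D.erase p) (E.erase p) hDrest hErest hkrest
    rw [← Finset.insert_erase hpD, ← Finset.insert_erase hqE, this]

lemma cell_letter_bound {r : ℕ+} {n : ℕ} {D : Finset (ℕ+ × ℕ+)} (hw : rcWord D = wordRM r n)
    {q : ℕ+ × ℕ+} (hq : q ∈ D) : (r:ℕ) ≤ (q.1:ℕ) + (q.2:ℕ) - 1 ∧ (q.1:ℕ) + (q.2:ℕ) - 1 < (r:ℕ) + n := by
  have hmem : (q.1 + q.2 - 1) ∈ wordRM r n := hw ▸ rcWord_mem_letter hq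
  obtain ⟨h1, h2⟩ := wordRM_mem hmem
  rw [ple] at h1
  rw [letter_coe] at h1 h2
  exact ⟨h1, h2⟩

lemma finite_le_r (r : ℕ+) : {s : ℕ+ | s ≤ r}.Finite := by
  have : {s : ℕ+ | s ≤ r} ⊆ (fun s : ℕ+ => (s:ℕ)) ⁻¹' (Set.Iic (r:ℕ)) := by
    intro s hs
    exact ple.mp hs
  exact Set.Finite.preimage (Set.injOn_of_injective (fun a b h => peq.mpr h))
    (Set.finite_Iic (r:ℕ)) |>.subset this

lemma word_surj : ∀ (n : ℕ) (r : ℕ+) (k : ℕ+ → ℕ), (∀ s, r < s → k s = 0) → (∑ᶠ s, k s) = n →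
    ∃ D : Finset (ℕ+ × ℕ+), rcWord D = wordRM r n ∧ ∀ s, rowCount D s = k s := by
  intro n
  induction n with
  | zero =>
    intro r k hsupp hsum
    classical
    have hzero : ∀ s, k s = 0 := by
      intro s
      by_contra hs
      have hsub : Function.support k ⊆ ↑(finite_le_r r).toFinset := by
        intro u hu
        rw [Set.Finite.coe_toFinset]
        by_contra hur
        exact hu (hsupp u (lt_of_not_ge hur))
      rw [finsum_eq_finset_sum_of_support_subset _ hsub] at hsum
      have hsF : s ∈ (finite_le_r r).toFinset := by
        rw [Set.Finite.mem_toFinset]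
        by_contra hur
        exact hs (hsupp s (lt_of_not_ge hur))
      exact hs (Finset.sum_eq_zero_iff.mp hsum s hsF)
    refine ⟨∅, by rw [rcWord, Finset.sort_empty]; rfl, fun s => ?_⟩
    rw [hzero s, rowCount, Finset.filter_empty, Finset.card_empty]
  | succ n ih =>
    intro r k hsupp hsum
    classical
    have hsub : Function.support k ⊆ ↑(finite_le_r r).toFinset := by
      intro u hu
      rw [Set.Finite.coe_toFinset]
      by_contra hur
      exact hu (hsupp u (lt_of_not_ge hur))
    set F := (finite_le_r r).toFinset with hF
    have hsumF : ∑ s ∈ F, k s = n + 1 := by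
      rw [← finsum_eq_finset_sum_of_support_subset _ hsub, hsum]
    set T := F.filter (fun s => k s ≠ 0) with hT
    have hTne : T.Nonempty := by
      rw [Finset.filter_nonempty_iff]
      by_contra hc
      push_neg at hc
      have : ∑ s ∈ F, k s = 0 := Finset.sum_eq_zero (fun s hs => by
        by_contra hks
        exact hks (hc s hs))
      omega
    set i₀ := T.min' hTne with hi₀
    have hi₀T : i₀ ∈ T := T.min'_mem hTne
    have hki₀ : k i₀ ≠ 0 := (Finset.mem_filter.mp hi₀T).2
    have hi₀r : i₀ ≤ r := by
      have := (Finset.mem_filter.mp hi₀T).1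
      rw [hF, Set.Finite.mem_toFinset] at this
      exact this
    have hmin : ∀ s, k s ≠ 0 → i₀ ≤ s := by
      intro s hs
      have hsF : s ∈ F := by
        rw [hF, Set.Finite.mem_toFinset]
        by_contra hur
        exact hs (hsupp s (lt_of_not_ge hur))
      exact T.min'_le s (Finset.mem_filter.mpr ⟨hsF, hs⟩)
    set k' : ℕ+ → ℕ := fun s => if s = i₀ then k s - 1 else k s with hk'
    have hk'supp : ∀ s, r < s → k' s = 0 := by
      intro s hs
      rw [hk']
      simp only
      split_ifs with he
      · rw [he, hsupp i₀ (he ▸ hs)]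
      · exact hsupp s hs
    have hk'le : ∀ s, k' s ≤ k s := by
      intro s
      rw [hk']
      simp only
      split_ifs <;> omega
    have hk'sum : (∑ᶠ s, k' s) = n := by
      have hsub' : Function.support k' ⊆ ↑F := by
        intro u hu
        apply hsub
        intro hku
        exact hu (by rw [hk']; simp only; split_ifs <;> omega)
      rw [finsum_eq_finset_sum_of_support_subset _ hsub']
      have hstep : ∀ s ∈ F, k s = k' s + (if s = i₀ then 1 else 0) := by
        intro s _
        rw [hk']
        simp only
        split_ifs with he
        · have : k i₀ ≠ 0 := hki₀
          rw [he]
          omega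
        · omega
      rw [Finset.sum_congr rfl hstep, Finset.sum_add_distrib, Finset.sum_ite_eq' F i₀] at hsumF
      rw [if_pos ((Finset.mem_filter.mp hi₀T).1)] at hsumF
      omega
    obtain ⟨D', hD'w, hD'k⟩ := ih r k' hk'supp hk'sum
    have hi₀n : (i₀:ℕ) ≤ (r:ℕ) + n := by
      have := ple.mp hi₀r
      omega
    set j₀ : ℕ+ := ⟨(r:ℕ) + n + 1 - (i₀:ℕ), by omega⟩ with hj₀
    set p₀ : ℕ+ × ℕ+ := (i₀, j₀) with hp₀
    have hp₀sum : (p₀.1:ℕ) + (p₀.2:ℕ) = (r:ℕ) + n + 1 := by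
      show (i₀:ℕ) + ((r:ℕ) + n + 1 - (i₀:ℕ)) = (r:ℕ) + n + 1
      omega
    have hp₀ne : p₀ ∉ D' := by
      intro hmem
      have := (cell_letter_bound hD'w hmem).2
      omega
    have hp₀min : ∀ q ∈ D', cellOrd p₀ q := by
      intro q hq
      have hrow : i₀ ≤ q.1 := by
        apply hmin
        have : rowCount D' q.1 ≠ 0 := rowCount_pos_iff.mpr ⟨q, hq, rfl⟩
        rw [hD'k q.1] at this
        intro hk0
        exact this (by rw [hk']; simp only; split_ifs <;> omega)
      rcases eq_or_ne p₀.1 q.1 with he | he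
      · refine Or.inr ⟨he, ?_⟩
        have hb := (cell_letter_bound hD'w hq).2
        have hq2 : 1 ≤ (q.2:ℕ) := q.2.2
        have he' := peq.mp he
        rw [ple]
        show (q.2:ℕ) ≤ (r:ℕ) + n + 1 - (i₀:ℕ)
        have : (p₀.1:ℕ) = (i₀:ℕ) := rfl
        omega
      · exact Or.inl (lt_of_le_of_ne (by exact hrow) (fun hh => he hh))
    refine ⟨insert p₀ D', ?_, ?_⟩
    · rw [rcWord_head (insert p₀ D') p₀ (Finset.mem_insert_self _ _)
        (fun q hq => by
          rcases Finset.mem_insert.mp hq with h1 | h1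
          · rw [h1]; exact cellOrd_refl p₀
          · exact hp₀min q h1),
        Finset.erase_insert hp₀ne, hD'w]
      show (p₀.1 + p₀.2 - 1) :: wordRM r n = padd r n :: wordRM r n
      congr 1
      rw [peq, letter_coe, padd_coe]
      omega
    · intro s
      rw [rowCount_insert hp₀ne s, hD'k s, hk']
      simp only
      show (if s = i₀ then k s - 1 else k s) + (if p₀.1 = s then 1 else 0) = k s
      have hp1 : p₀.1 = i₀ := rfl
      rw [hp1]
      rcases eq_or_ne s i₀ with he | he
      · rw [if_pos he, if_pos he.symm, he]
        omega
      · rw [if_neg he, if_neg (fun hh => he hh.symm)]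
        omega

/-- Every cell of an rc-graph of σ[r,m] lies in a row ≤ r, and an rc-graph of σ[r,m]
is uniquely determined by its row counts (k₁,…,k_r), which can be any tuple of
nonnegative integers summing to m.  Here σ = σ[r,m] is characterized by its values:
σ(i) = i for i < r, σ(r) = r + m, σ(j) = j − 1 for r < j ≤ r + m (stated as
σ(j) + 1 = j), and σ(j) = j for j > r + m. -/
theorem rcgraphs_of_sigma (r m : ℕ+) (σ : Equiv.Perm ℕ+)
    (hσ1 : ∀ i, i < r → σ i = i)
    (hσ2 : σ r = r + m)
    (hσ3 : ∀ j, r < j → j ≤ r + m → σ j + 1 = j)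
    (hσ4 : ∀ j, r + m < j → σ j = j) :
    (∀ D ∈ RCset σ, ∀ p ∈ D, p.1 ≤ r) ∧
    Set.BijOn (fun D : Finset (ℕ+ × ℕ+) => fun s => rowCount D s)
      (RCset σ)
      {k : ℕ+ → ℕ | (∀ s, r < s → k s = 0) ∧ ∑ᶠ s, k s = (m : ℕ)} := by
  classical
  have hsig : Sig r (m:ℕ) σ := by
    refine ⟨hσ1, ?_, ?_, ?_⟩
    · rw [hσ2]; push_cast; rfl
    · intro j h1 h2
      exact hσ3 j h1 (ple.mpr (by push_cast; exact h2))
    · intro j hj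
      exact hσ4 j (plt.mpr (by push_cast; exact hj))
  have hplen : plength σ = (m:ℕ) := sig_plength hsig
  have hiff : ∀ D : Finset (ℕ+ × ℕ+), D ∈ RCset σ ↔ rcWord D = wordRM r (m:ℕ) := by
    intro D
    constructor
    · rintro ⟨hp, hl⟩
      exact uniqueWord (m:ℕ) r σ hsig _ hp (by rw [hl, hplen])
    · intro hw
      refine ⟨?_, ?_⟩
      · rw [hw]
        exact sig_unique (sig_prod (m:ℕ) r) hsig
      · rw [hw, wordRM_length, hplen]
  constructor
  · intro D hD p hp
    exact row_bound ((hiff D).mp hD) hp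
  · refine ⟨?_, ?_, ?_⟩
    · intro D hD
      have hw := (hiff D).mp hD
      constructor
      · intro s hs
        by_contra hc
        obtain ⟨q, hq, hq1⟩ := rowCount_pos_iff.mp hc
        have := row_bound hw hq
        rw [hq1] at this
        exact absurd hs (not_lt.mpr this)
      · rw [finsum_rowCount, ← rcWord_length, hw, wordRM_length]
    · intro D hD E hE hfeq
      exact word_inj (m:ℕ) r D E ((hiff D).mp hD) ((hiff E).mp hE) (fun s => congrFun hfeq s)
    · intro k hk
      obtain ⟨D, hDw, hDk⟩ := word_surj (m:ℕ) r k hk.1 hk.2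
      exact ⟨D, (hiff D).mpr hDw, funext hDk⟩
end
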